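/- arXiv:0809.3274 — 8 statements merged into one kernel-verified Lean document; each statement's English description precedes it below -/
import Mathlib

section
/- A set Λ ⊆ ℝ is a spectrum for the unit interval [0,1) (i.e., {e^{2πiλx} : λ ∈ Λ} is an orthonormal basis of L²[0,1)) if and only if Λ is a tiling set for [0,1), i.e., the translates [0,1)+λ, λ ∈ Λ, partition ℝ up to measure zero. -/
open MeasureTheory Complex

/-! ### Auxiliary lemmas -/

lemma twoPiI_ne_zero : (2 * Real.pi * I : ℂ) ≠ 0 := by
  simp [Real.pi_ne_zero, Complex.I_ne_zero]

lemma integral_exp_Ico (c : ℝ) :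
    (∫ x in Set.Ico (0:ℝ) 1, Complex.exp (2 * Real.pi * I * c * x))
      = ∫ x in (0:ℝ)..1, Complex.exp ((2 * Real.pi * I * c) * x) := by
  rw [MeasureTheory.restrict_Ico_eq_restrict_Ioc, intervalIntegral.integral_of_le zero_le_one]

lemma integral_exp_eq_zero {n : ℤ} (hn : n ≠ 0) :
    (∫ x in Set.Ico (0:ℝ) 1, Complex.exp (2 * Real.pi * I * (n:ℝ) * x)) = 0 := by
  have hc : (2 * Real.pi * I * (n:ℝ) : ℂ) ≠ 0 := by
    simp [Real.pi_ne_zero, Complex.I_ne_zero, hn, Complex.ext_iff]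
  rw [integral_exp_Ico, integral_exp_mul_complex hc]
  have h1 : Complex.exp (2 * ↑Real.pi * I * (n:ℝ) * ((1:ℝ):ℂ)) = 1 := by
    rw [Complex.exp_eq_one_iff]
    exact ⟨n, by push_cast; ring⟩
  have h0 : Complex.exp (2 * ↑Real.pi * I * (n:ℝ) * ((0:ℝ):ℂ)) = 1 := by
    norm_num
  rw [h1, h0, sub_self, zero_div]

lemma integral_exp_ne_zero_of_not_int {c : ℝ} (hc : ∀ n : ℤ, c ≠ n) :
    (∫ x in Set.Ico (0:ℝ) 1, Complex.exp (2 * Real.pi * I * c * x)) ≠ 0 := by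
  have hc0 : c ≠ 0 := by simpa using hc 0
  have hk : (2 * Real.pi * I * c : ℂ) ≠ 0 := by
    simp [Real.pi_ne_zero, Complex.I_ne_zero, hc0, Complex.ext_iff]
  rw [integral_exp_Ico, integral_exp_mul_complex hk]
  rw [div_ne_zero_iff]
  refine ⟨?_, hk⟩
  rw [sub_ne_zero]
  intro h
  rw [Complex.ofReal_one, mul_one] at h
  rw [show ((0:ℝ):ℂ) = 0 by norm_num, mul_zero, Complex.exp_zero] at h
  rw [Complex.exp_eq_one_iff] at h
  obtain ⟨n, hn⟩ := h
  apply hc n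
  have h2 : (c : ℂ) = (n : ℂ) := by
    apply mul_left_cancel₀ twoPiI_ne_zero
    linear_combination hn
  exact_mod_cast h2

lemma norm_exp_I_aux (z : ℂ) (r : ℝ) (h : z = (r:ℂ) * I) : ‖Complex.exp z‖ = 1 := by
  rw [h, Complex.norm_exp_ofReal_mul_I]

lemma exists_mem_of_pos {S : Set ℝ} (hS : volume S ≠ 0) {P : ℝ → Prop} (h : ∀ᵐ x, P x) :
    ∃ x ∈ S, P x :=
  MeasureTheory.Measure.exists_mem_of_measure_ne_zero_of_ae hS
    (h.filter_mono (ae_mono Measure.restrict_le_self))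

lemma ioo_ne_zero {u v : ℝ} (h : u < v) : volume (Set.Ioo u v) ≠ 0 := by
  simp only [Real.volume_Ioo, ne_eq, ENNReal.ofReal_eq_zero, not_le]
  linarith

lemma not_ae_zero (f : ℝ → ℂ) (hn : ∀ x, f x ≠ 0) :
    ¬ (f =ᵐ[volume.restrict (Set.Ico (0:ℝ) 1)] 0) := by
  intro h
  have h2 : ∀ᵐ x ∂(volume.restrict (Set.Ico (0:ℝ) 1)), False :=
    h.mono fun x hx => hn x hx
  rw [ae_iff] at h2
  simp only [not_false_iff, Set.setOf_true] at h2
  rw [Measure.restrict_apply_univ] at h2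
  simp [Real.volume_Ico] at h2

/-! ### Completeness of the Fourier system on `[0,1)` -/

lemma fourier_complete (f : ℝ → ℂ)
    (hf : MemLp f 2 (volume.restrict (Set.Ico (0:ℝ) 1)))
    (h : ∀ n : ℤ, ∫ x in Set.Ico (0:ℝ) 1, f x * Complex.exp (-(2 * Real.pi * I * (n:ℝ) * x)) = 0) :
    f =ᵐ[volume.restrict (Set.Ico (0:ℝ) 1)] 0 := by
  haveI : Fact ((0:ℝ) < 1) := ⟨one_pos⟩
  have hres : volume.restrict (Set.Ico (0:ℝ) 1) = volume.restrict (Set.Ioc (0:ℝ) 1) :=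
    MeasureTheory.restrict_Ico_eq_restrict_Ioc
  rw [hres] at hf ⊢
  set F := hf.aestronglyMeasurable.mk f with hF
  have hFmeas : StronglyMeasurable F := hf.aestronglyMeasurable.stronglyMeasurable_mk
  have hfF : f =ᵐ[volume.restrict (Set.Ioc (0:ℝ) 1)] F := hf.aestronglyMeasurable.ae_eq_mk
  set g : AddCircle (1:ℝ) → ℂ := AddCircle.liftIoc 1 0 F with hgdef
  have hg_meas : StronglyMeasurable g := by
    have : g = (fun y : Set.Ioc (0:ℝ) (0+1) => F y) ∘ (AddCircle.measurableEquivIoc 1 0) := rfl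
    rw [this]
    exact (hFmeas.comp_measurable measurable_subtype_coe).comp_measurable
      (AddCircle.measurableEquivIoc 1 0).measurable
  have hvol : (volume : Measure (AddCircle (1:ℝ))) = AddCircle.haarAddCircle := by
    rw [AddCircle.volume_eq_smul_haarAddCircle]; simp
  have hmp : MeasurePreserving ((↑) : ℝ → AddCircle (1:ℝ))
      (volume.restrict (Set.Ioc (0:ℝ) 1)) AddCircle.haarAddCircle := by
    have := AddCircle.measurePreserving_mk (1:ℝ) 0
    rwa [zero_add, hvol] at this
  have hgf : ∀ x ∈ Set.Ioc (0:ℝ) 1, g (x : AddCircle (1:ℝ)) = F x := fun x hx =>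
    AddCircle.liftIoc_coe_apply (by simpa using hx)
  have hcomp : (fun x : ℝ => g (x : AddCircle (1:ℝ)))
      =ᵐ[volume.restrict (Set.Ioc (0:ℝ) 1)] F := by
    filter_upwards [ae_restrict_mem measurableSet_Ioc] with x hx using hgf x hx
  have hgMem : MemLp g 2 AddCircle.haarAddCircle := by
    refine ⟨hg_meas.aestronglyMeasurable, ?_⟩
    rw [← hmp.map_eq,
      eLpNorm_map_measure (hmp.map_eq ▸ hg_meas.aestronglyMeasurable) hmp.aemeasurable]
    exact (eLpNorm_congr_ae (f := g ∘ (QuotientAddGroup.mk : ℝ → AddCircle (1:ℝ)))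
      (hcomp.trans hfF.symm)).trans_lt hf.2
  have hcoeff : ∀ n : ℤ, fourierCoeff g n = 0 := by
    intro n
    rw [hgdef, fourierCoeff_liftIoc_eq, fourierCoeffOn_eq_integral]
    have key : (∫ x in (0:ℝ)..0+1, fourier (-n) (x : AddCircle (0+1-0:ℝ)) • F x) = 0 := by
      rw [intervalIntegral.integral_of_le (by norm_num)]
      have hI : (∫ x in Set.Ioc (0:ℝ) (0+1), fourier (-n) (x : AddCircle (0+1-0:ℝ)) • F x)
          = ∫ x in Set.Ioc (0:ℝ) 1, f x * Complex.exp (-(2 * Real.pi * I * (n:ℝ) * x)) := by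
        rw [show ((0:ℝ)+1) = 1 by norm_num]
        refine integral_congr_ae ?_
        filter_upwards [hfF] with x hx
        rw [fourier_coe_apply, hx, smul_eq_mul, mul_comm]
        congr 1
        push_cast
        ring_nf
      rw [hI, ← hres, h n]
    rw [key, smul_zero]
  set gL := hgMem.toLp g with hgL
  have hcoeffL : ∀ n : ℤ, fourierCoeff (gL : AddCircle (1:ℝ) → ℂ) n = 0 := by
    intro n
    have heq : fourierCoeff (gL : AddCircle (1:ℝ) → ℂ) n = fourierCoeff g n := by
      refine integral_congr_ae ?_
      filter_upwards [hgMem.coeFn_toLp] with t ht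
      rw [ht]
    rw [heq, hcoeff n]
  have hgL0 : gL = 0 := by
    have hrepr : fourierBasis.repr gL = 0 := by
      apply lp.ext
      funext n
      rw [fourierBasis_repr, hcoeffL n]
      rfl
    exact fourierBasis.repr.injective (by rw [hrepr, map_zero])
  have hg0 : g =ᵐ[AddCircle.haarAddCircle] 0 := by
    have h1 : (gL : AddCircle (1:ℝ) → ℂ) =ᵐ[AddCircle.haarAddCircle] g := hgMem.coeFn_toLp
    have h2 : (gL : AddCircle (1:ℝ) → ℂ) =ᵐ[AddCircle.haarAddCircle] 0 := by
      rw [hgL0]; exact Lp.coeFn_zero _ _ _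
    exact h1.symm.trans h2
  have hF0 : F =ᵐ[volume.restrict (Set.Ioc (0:ℝ) 1)] 0 := by
    have := ae_eq_comp (f := ((↑) : ℝ → AddCircle (1:ℝ))) hmp.aemeasurable
      (hmp.map_eq.symm ▸ hg0)
    exact hcomp.symm.trans this
  exact hfF.trans hF0

/-! ### Tiling implies `Λ = a + ℤ` -/

lemma tiling_structure (Λ : Set ℝ)
    (hae : ∀ᵐ x : ℝ, ∃! lam, lam ∈ Λ ∧ x - lam ∈ Set.Ico (0:ℝ) 1) :
    ∃ a : ℝ, (∀ n : ℤ, a + n ∈ Λ) ∧ (∀ l ∈ Λ, ∃ n : ℤ, l = a + n) := by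
  have hsep : ∀ l ∈ Λ, ∀ l' ∈ Λ, l ≠ l' → 1 ≤ |l - l'| := by
    have claim : ∀ l ∈ Λ, ∀ l' ∈ Λ, l < l' → l' - l < 1 → False := by
      intro l hl l' hl' hlt hd
      obtain ⟨x, hxS, hx⟩ := exists_mem_of_pos (ioo_ne_zero (show l' < l + 1 by linarith)) hae
      obtain ⟨hx1, hx2⟩ := hxS
      have e1 : l = l' := hx.unique
        ⟨hl, ⟨by linarith, by linarith⟩⟩ ⟨hl', ⟨by linarith, by linarith⟩⟩
      exact absurd e1 (ne_of_lt hlt)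
    intro l hl l' hl' hne
    by_contra hlt
    push_neg at hlt
    rw [abs_sub_lt_iff] at hlt
    rcases lt_or_gt_of_ne hne with h | h
    · exact claim l hl l' hl' h (by linarith [hlt.2])
    · exact claim l' hl' l hl h (by linarith [hlt.1])
  obtain ⟨x₀, _, ⟨a, ⟨haΛ, _⟩, _⟩⟩ :=
    exists_mem_of_pos (ioo_ne_zero (show (0:ℝ) < 1 by norm_num)) hae
  have hup : ∀ b ∈ Λ, b + 1 ∈ Λ := by
    intro b hb
    by_contra hb1
    by_cases hex : ∃ m ∈ Λ, m ∈ Set.Ioc (b+1) (b+2)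
    · obtain ⟨m, hmΛ, hm1, hm2⟩ := hex
      obtain ⟨x, hxS, hx⟩ := exists_mem_of_pos (ioo_ne_zero hm1) hae
      obtain ⟨hx1, hx2⟩ := hxS
      obtain ⟨l, ⟨hlΛ, hl0, hl1⟩, _⟩ := hx
      have hlx : l ≤ x := by linarith
      have hlx1 : x - 1 < l := by linarith
      have hlb : l ≠ b + 1 := fun h => hb1 (h ▸ hlΛ)
      rcases lt_trichotomy l (b+1) with h1 | h1 | h1
      · have := hsep l hlΛ b hb (by intro h; subst h; linarith)
        rw [abs_of_pos (by linarith : (0:ℝ) < l - b)] at this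
        linarith
      · exact hlb h1
      · have hlm : l < m := by linarith
        have := hsep l hlΛ m hmΛ (ne_of_lt hlm)
        rw [abs_of_neg (by linarith : l - m < 0)] at this
        linarith
    · push_neg at hex
      obtain ⟨x, hxS, hx⟩ := exists_mem_of_pos
        (ioo_ne_zero (show b+1 < b+2 by linarith)) hae
      obtain ⟨hx1, hx2⟩ := hxS
      obtain ⟨l, ⟨hlΛ, hl0, hl1⟩, _⟩ := hx
      have hlx : l ≤ x := by linarith
      have hlx1 : x - 1 < l := by linarith
      have hlb : l ≠ b + 1 := fun h => hb1 (h ▸ hlΛ)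
      rcases lt_trichotomy l (b+1) with h1 | h1 | h1
      · have := hsep l hlΛ b hb (by intro h; subst h; linarith)
        rw [abs_of_pos (by linarith : (0:ℝ) < l - b)] at this
        linarith
      · exact hlb h1
      · exact hex l hlΛ ⟨h1, by linarith⟩
  have hdown : ∀ b ∈ Λ, b - 1 ∈ Λ := by
    intro b hb
    by_contra hb1
    by_cases hex : ∃ m ∈ Λ, m ∈ Set.Ico (b-2) (b-1)
    · obtain ⟨m, hmΛ, hm1, hm2⟩ := hex
      have hm1Λ : m + 1 ∈ Λ := hup m hmΛ
      have hne1 : m + 1 ≠ b - 1 := fun h => hb1 (h ▸ hm1Λ)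
      have := hsep (m+1) hm1Λ b hb (by intro h; linarith [h ▸ hm2])
      rw [abs_of_neg (by linarith : (m+1) - b < 0)] at this
      have : m + 1 ≤ b - 1 := by linarith
      exact hne1 (le_antisymm this (by linarith))
    · push_neg at hex
      obtain ⟨x, hxS, hx⟩ := exists_mem_of_pos
        (ioo_ne_zero (show b-1 < b by linarith)) hae
      obtain ⟨hx1, hx2⟩ := hxS
      obtain ⟨l, ⟨hlΛ, hl0, hl1⟩, _⟩ := hx
      have hlx : l ≤ x := by linarith
      have hlx1 : x - 1 < l := by linarith
      have hlb : l ≠ b - 1 := fun h => hb1 (h ▸ hlΛ)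
      rcases lt_trichotomy l (b-1) with h1 | h1 | h1
      · exact hex l hlΛ ⟨by linarith, h1⟩
      · exact hlb h1
      · have := hsep l hlΛ b hb (by intro h; subst h; linarith)
        rw [abs_of_neg (by linarith : l - b < 0)] at this
        linarith
  have hmem : ∀ n : ℤ, a + n ∈ Λ := by
    intro n
    induction n using Int.induction_on with
    | zero => simpa using haΛ
    | succ k ih =>
      have := hup _ ih
      have he : a + ((k:ℤ)+1 : ℤ) = (a + (k:ℤ)) + 1 := by push_cast; ring
      rwa [he]
    | pred k ih =>
      have := hdown _ ih
      have he : a + (-(k:ℤ)-1 : ℤ) = (a + (-(k:ℤ) : ℤ)) - 1 := by push_cast; ring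
      rwa [he]
  refine ⟨a, hmem, ?_⟩
  intro l hl
  refine ⟨⌊l - a⌋, ?_⟩
  by_contra hne'
  have h1 : a + (⌊l - a⌋ : ℝ) ∈ Λ := by exact_mod_cast hmem ⌊l - a⌋
  have h2 : l ≠ a + (⌊l - a⌋ : ℝ) := hne'
  have h3 := hsep l hl _ h1 h2
  have hf1 : ((⌊l - a⌋ : ℤ) : ℝ) ≤ l - a := Int.floor_le _
  have hf2 : l - a < (⌊l - a⌋ : ℤ) + 1 := Int.lt_floor_add_one _
  rw [_root_.abs_of_nonneg (by linarith)] at h3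
  linarith

/-! ### Main theorem -/

/-- `Λ ⊆ ℝ` is a spectrum for `[0,1)` iff `Λ` is a tiling set for `[0,1)`. -/
theorem spectrum_iff_tiling_unit_interval (Λ : Set ℝ) :
    ((∀ lam ∈ Λ, ∀ lam' ∈ Λ, lam ≠ lam' →
        ∫ x in Set.Ico (0:ℝ) 1, Complex.exp (2 * Real.pi * I * (lam - lam') * x) = 0) ∧
      (∀ f : ℝ → ℂ, MemLp f 2 (volume.restrict (Set.Ico (0:ℝ) 1)) →
        (∀ lam ∈ Λ,
          ∫ x in Set.Ico (0:ℝ) 1, f x * Complex.exp (-(2 * Real.pi * I * lam * x)) = 0) →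
        f =ᵐ[volume.restrict (Set.Ico (0:ℝ) 1)] 0)) ↔
    (∀ᵐ x : ℝ, ∃! lam, lam ∈ Λ ∧ x - lam ∈ Set.Ico (0:ℝ) 1) := by
  haveI : IsFiniteMeasure (volume.restrict (Set.Ico (0:ℝ) 1)) :=
    ⟨by rw [Measure.restrict_apply_univ]; simp [Real.volume_Ico]⟩
  constructor
  · rintro ⟨horth, hcomp⟩
    -- Λ is nonempty
    have hne : Λ.Nonempty := by
      by_contra hemp
      rw [Set.not_nonempty_iff_eq_empty] at hemp
      have h1 := hcomp (fun _ => (1:ℂ)) (memLp_const 1)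
        (by intro lam hlam; rw [hemp] at hlam; exact absurd hlam (Set.notMem_empty _))
      exact not_ae_zero _ (fun _ => one_ne_zero) h1
    obtain ⟨a, ha⟩ := hne
    -- every element of Λ is of the form a + n
    have hint : ∀ lam ∈ Λ, ∃ n : ℤ, lam = a + n := by
      intro lam hlam
      rcases eq_or_ne lam a with rfl | hne'
      · exact ⟨0, by simp⟩
      · by_contra hno
        push_neg at hno
        have hnoint : ∀ n : ℤ, lam - a ≠ n := fun n h => hno n (by linarith)
        apply integral_exp_ne_zero_of_not_int hnoint
        have := horth lam hlam a ha hne'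
        rw [show ((lam - a : ℝ) : ℂ) = (lam : ℂ) - (a : ℂ) from Complex.ofReal_sub _ _]
        exact this
    -- every a + n is in Λ
    have hall : ∀ n : ℤ, a + (n:ℝ) ∈ Λ := by
      intro n
      by_contra hn
      set f : ℝ → ℂ := fun x => Complex.exp (2 * Real.pi * I * ((a + (n:ℝ) : ℝ):ℂ) * x) with hfdef
      have hfmem : MemLp f 2 (volume.restrict (Set.Ico (0:ℝ) 1)) := by
        refine MemLp.of_bound ?_ 1 (Filter.Eventually.of_forall fun x => ?_)
        · exact (Complex.continuous_exp.comp
            (continuous_const.mul Complex.continuous_ofReal)).aestronglyMeasurable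
        · exact le_of_eq (norm_exp_I_aux _ (2 * Real.pi * (a + (n:ℝ)) * x) (by push_cast; ring))
      have horthf : ∀ lam ∈ Λ,
          ∫ x in Set.Ico (0:ℝ) 1, f x * Complex.exp (-(2 * Real.pi * I * lam * x)) = 0 := by
        intro lam hlam
        obtain ⟨m, rfl⟩ := hint lam hlam
        have hmn : n - m ≠ 0 := by
          intro h
          have : m = n := by omega
          exact hn (this ▸ hlam)
        have hptw : ∀ x ∈ Set.Ico (0:ℝ) 1,
            f x * Complex.exp (-(2 * Real.pi * I * ((a + (m:ℝ) : ℝ):ℂ) * x))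
              = Complex.exp (2 * Real.pi * I * (((n - m : ℤ):ℝ):ℂ) * x) := by
          intro x _
          rw [hfdef, ← Complex.exp_add]
          congr 1
          push_cast
          ring
        calc (∫ x in Set.Ico (0:ℝ) 1,
              f x * Complex.exp (-(2 * Real.pi * I * ((a + (m:ℝ) : ℝ):ℂ) * x)))
            = ∫ x in Set.Ico (0:ℝ) 1, Complex.exp (2 * Real.pi * I * (((n - m : ℤ):ℝ):ℂ) * x) :=
              setIntegral_congr_fun measurableSet_Ico hptw
          _ = 0 := integral_exp_eq_zero hmn
      have := hcomp f hfmem horthf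
      exact not_ae_zero f (fun x => Complex.exp_ne_zero _) this
    -- tiling
    refine Filter.Eventually.of_forall fun x => ?_
    refine ⟨a + (⌊x - a⌋ : ℝ), ⟨hall _, Set.mem_Ico.mpr
      ⟨by linarith [Int.floor_le (x - a)], by linarith [Int.lt_floor_add_one (x - a)]⟩⟩, ?_⟩
    rintro y ⟨hyΛ, hy0, hy1⟩
    obtain ⟨m, rfl⟩ := hint y hyΛ
    have : ⌊x - a⌋ = m := Int.floor_eq_iff.mpr ⟨by linarith, by linarith⟩
    rw [this]
  · intro hae
    obtain ⟨a, hall, hint⟩ := tiling_structure Λ hae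
    constructor
    · intro l hl l' hl' hne'
      obtain ⟨m, rfl⟩ := hint l hl
      obtain ⟨k, rfl⟩ := hint l' hl'
      have hmk : m - k ≠ 0 := by
        intro h
        have : m = k := by omega
        exact hne' (by rw [this])
      have hptw : ∀ x ∈ Set.Ico (0:ℝ) 1,
          Complex.exp (2 * Real.pi * I * (((a + (m:ℝ) : ℝ):ℂ) - ((a + (k:ℝ) : ℝ):ℂ)) * x)
            = Complex.exp (2 * Real.pi * I * (((m - k : ℤ):ℝ):ℂ) * x) := by
        intro x _
        congr 1
        push_cast
        ring
      calc (∫ x in Set.Ico (0:ℝ) 1,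
            Complex.exp (2 * Real.pi * I * (((a + (m:ℝ) : ℝ):ℂ) - ((a + (k:ℝ) : ℝ):ℂ)) * x))
          = ∫ x in Set.Ico (0:ℝ) 1, Complex.exp (2 * Real.pi * I * (((m - k : ℤ):ℝ):ℂ) * x) :=
            setIntegral_congr_fun measurableSet_Ico hptw
        _ = 0 := integral_exp_eq_zero hmk
    · intro f hf horthf
      set F : ℝ → ℂ := fun x => f x * Complex.exp (-(2 * Real.pi * I * (a:ℂ) * x)) with hFdef
      have hnorm : ∀ x, ‖F x‖ = ‖f x‖ := by
        intro x
        rw [hFdef]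
        simp only [norm_mul]
        rw [norm_exp_I_aux _ (-(2 * Real.pi * a * x)) (by push_cast; ring), mul_one]
      have hFmem : MemLp F 2 (volume.restrict (Set.Ico (0:ℝ) 1)) := by
        refine ⟨hf.aestronglyMeasurable.mul ?_, ?_⟩
        · exact (Complex.continuous_exp.comp
            ((continuous_const.mul Complex.continuous_ofReal).neg)).aestronglyMeasurable
        · rw [eLpNorm_congr_norm_ae (Filter.Eventually.of_forall fun x => hnorm x)]
          exact hf.2
      have hFcoeff : ∀ n : ℤ,
          ∫ x in Set.Ico (0:ℝ) 1, F x * Complex.exp (-(2 * Real.pi * I * (n:ℝ) * x)) = 0 := by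
        intro n
        have hptw : ∀ x ∈ Set.Ico (0:ℝ) 1,
            F x * Complex.exp (-(2 * Real.pi * I * ((n:ℝ):ℂ) * x))
              = f x * Complex.exp (-(2 * Real.pi * I * ((a + (n:ℝ) : ℝ):ℂ) * x)) := by
          intro x _
          rw [hFdef]
          rw [mul_assoc, ← Complex.exp_add]
          congr 2
          push_cast
          ring
        calc (∫ x in Set.Ico (0:ℝ) 1, F x * Complex.exp (-(2 * Real.pi * I * ((n:ℝ):ℂ) * x)))
            = ∫ x in Set.Ico (0:ℝ) 1,
                f x * Complex.exp (-(2 * Real.pi * I * ((a + (n:ℝ) : ℝ):ℂ) * x)) :=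
              setIntegral_congr_fun measurableSet_Ico hptw
          _ = 0 := horthf _ (hall n)
      have hF0 := fourier_complete F hFmem hFcoeff
      filter_upwards [hF0] with x hx
      have : f x * Complex.exp (-(2 * Real.pi * I * (a:ℂ) * x)) = 0 := hx
      exact (mul_eq_zero.mp this).resolve_right (Complex.exp_ne_zero _)
end

section
/- Let μ be the invariant measure of the IFS τ₀(x) = x/4, τ₂(x) = (x+2)/4 on ℝ with equal weights 1/2 (the Jorgensen–Pedersen quarter Cantor measure), i.e., ∫f dμ = ½∫f(x/4)dμ(x) + ½∫f((x+2)/4)dμ(x) for all continuous f. Then for the set Λ = {∑_{k=0}^{n} 4^k a_k : n ∈ ℕ, a_k ∈ {0,1}}, the exponentials e_λ(x) = exp(2πiλx), λ ∈ Λ, are pairwise orthogonal in L²(μ). -/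
open MeasureTheory Complex

private theorem jp_odd_extract : ∀ (M : ℕ) (d : ℕ → ℤ),
    (∀ k, d k = -1 ∨ d k = 0 ∨ d k = 1) → (∃ k < M, d k ≠ 0) →
    ∃ m : ℕ, ∃ j : ℤ, Odd j ∧ ∑ k ∈ Finset.range M, 4 ^ k * d k = 4 ^ m * j := by
  intro M
  induction M with
  | zero => rintro d _ ⟨k, hk, _⟩; omega
  | succ M ih =>
    intro d hd hne
    by_cases h0 : d 0 = 0
    · have hd' : ∀ k, d (k + 1) = -1 ∨ d (k + 1) = 0 ∨ d (k + 1) = 1 := fun k => hd (k + 1)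
      have hne' : ∃ k < M, d (k + 1) ≠ 0 := by
        obtain ⟨k, hk, hk0⟩ := hne
        rcases k with _ | k
        · exact absurd h0 hk0
        · exact ⟨k, by omega, hk0⟩
      obtain ⟨m, j, hj, hsum⟩ := ih (fun k => d (k + 1)) hd' hne'
      refine ⟨m + 1, j, hj, ?_⟩
      rw [Finset.sum_range_succ']
      simp only [h0, mul_zero, pow_zero, add_zero]
      have : ∑ k ∈ Finset.range M, (4:ℤ) ^ (k + 1) * d (k + 1)
          = 4 * ∑ k ∈ Finset.range M, 4 ^ k * d (k + 1) := by
        rw [Finset.mul_sum]; apply Finset.sum_congr rfl; intro k _; ring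
      rw [this, hsum]; ring
    · refine ⟨0, ∑ k ∈ Finset.range (M + 1), 4 ^ k * d k, ?_, by ring⟩
      rw [Finset.sum_range_succ']
      apply Even.add_odd
      · rw [Int.even_iff]
        have : (2:ℤ) ∣ ∑ k ∈ Finset.range M, 4 ^ (k + 1) * d (k + 1) := by
          apply Finset.dvd_sum
          intro k _
          exact Dvd.dvd.mul_right
            (dvd_trans ⟨2, rfl⟩ (dvd_pow_self (4:ℤ) (Nat.succ_ne_zero k))) _
        omega
      · simp only [pow_zero, one_mul]
        rcases hd 0 with h | h | h <;> simp [h] at h0 ⊢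

private theorem jp_step (μ : Measure ℝ) [IsProbabilityMeasure μ]
    (hμ : ∀ f : ℝ → ℂ, Continuous f →
      ∫ x, f x ∂μ = (1/2) * ∫ x, f (x / 4) ∂μ + (1/2) * ∫ x, f ((x + 2) / 4) ∂μ)
    (t : ℝ) :
    ∫ x, Complex.exp (2 * Real.pi * I * t * x) ∂μ
      = (1 + Complex.exp (Real.pi * I * t)) / 2
        * ∫ x, Complex.exp (2 * Real.pi * I * (t / 4) * x) ∂μ := by
  have hc : Continuous fun x : ℝ => Complex.exp (2 * Real.pi * I * t * x) :=
    Complex.continuous_exp.comp (by continuity)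
  have h := hμ (fun x : ℝ => Complex.exp (2 * Real.pi * I * t * x)) hc
  have e1 : (fun x : ℝ => Complex.exp (2 * Real.pi * I * t * ((x : ℝ) / 4 : ℝ)))
      = fun x : ℝ => Complex.exp (2 * Real.pi * I * ((t / 4 : ℝ) : ℂ) * x) := by
    funext x; congr 1; push_cast; ring
  have e2 : (fun x : ℝ => Complex.exp (2 * Real.pi * I * t * (((x + 2) / 4 : ℝ) : ℂ)))
      = fun x : ℝ => Complex.exp ((Real.pi : ℂ) * I * t)
          * Complex.exp (2 * Real.pi * I * ((t / 4 : ℝ) : ℂ) * x) := by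
    funext x; rw [← Complex.exp_add]; congr 1; push_cast; ring
  simp only [e1, e2] at h
  rw [MeasureTheory.integral_const_mul] at h
  rw [h]; push_cast; ring

private theorem jp_vanish (μ : Measure ℝ) [IsProbabilityMeasure μ]
    (hμ : ∀ f : ℝ → ℂ, Continuous f →
      ∫ x, f x ∂μ = (1/2) * ∫ x, f (x / 4) ∂μ + (1/2) * ∫ x, f ((x + 2) / 4) ∂μ) :
    ∀ (m : ℕ) (j : ℤ), Odd j → ∀ t : ℝ, t = (4 : ℝ) ^ m * j →
      ∫ x, Complex.exp (2 * Real.pi * I * t * x) ∂μ = 0 := by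
  intro m
  induction m with
  | zero =>
    intro j hj t ht
    rw [jp_step μ hμ]
    have hexp : Complex.exp ((Real.pi : ℂ) * I * t) = -1 := by
      obtain ⟨k, hk⟩ := hj
      have ht' : (t : ℂ) = 2 * (k : ℂ) + 1 := by
        rw [ht, hk]; push_cast [pow_zero]; ring
      rw [ht', show (Real.pi : ℂ) * I * (2 * (k:ℂ) + 1)
          = (k : ℤ) * (2 * Real.pi * I) + Real.pi * I by ring]
      rw [Complex.exp_add, Complex.exp_int_mul_two_pi_mul_I, Complex.exp_pi_mul_I]
      ring
    rw [hexp]; ring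
  | succ m ih =>
    intro j hj t ht
    rw [jp_step μ hμ]
    have h4 := ih j hj (t / 4) (by rw [ht]; ring)
    rw [show ((t : ℂ) / 4) = ((t / 4 : ℝ) : ℂ) by push_cast; ring, h4, mul_zero]

/-- Jorgensen–Pedersen: for the quarter Cantor measure (IFS `x/4`, `(x+2)/4`, equal
weights), the exponentials with frequencies `∑ 4^k a_k`, `a_k ∈ {0,1}`, are pairwise
orthogonal in `L²(μ)`. -/
theorem jorgensen_pedersen_orthogonality
    (μ : Measure ℝ) [IsProbabilityMeasure μ]
    (hμ : ∀ f : ℝ → ℂ, Continuous f →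
      ∫ x, f x ∂μ = (1/2) * ∫ x, f (x / 4) ∂μ + (1/2) * ∫ x, f ((x + 2) / 4) ∂μ)
    (Λ : Set ℝ)
    (hΛ : Λ = {t : ℝ | ∃ (n : ℕ) (a : ℕ → ℕ), (∀ k, a k ≤ 1) ∧
      t = ∑ k ∈ Finset.range (n + 1), (4 : ℝ) ^ k * a k}) :
    ∀ lam ∈ Λ, ∀ lam' ∈ Λ, lam ≠ lam' →
      ∫ x, Complex.exp (2 * Real.pi * I * (lam - lam') * x) ∂μ = 0 := by
  subst hΛ
  rintro lam ⟨n, a, ha, rfl⟩ lam' ⟨n', b, hb, rfl⟩ hne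
  set M := max (n + 1) (n' + 1) with hM
  set d : ℕ → ℤ := fun k =>
    (if k < n + 1 then (a k : ℤ) else 0) - (if k < n' + 1 then (b k : ℤ) else 0) with hd
  have hcast : (∑ k ∈ Finset.range (n + 1), (4 : ℝ) ^ k * a k)
      - (∑ k ∈ Finset.range (n' + 1), (4 : ℝ) ^ k * b k)
      = ((∑ k ∈ Finset.range M, 4 ^ k * d k : ℤ) : ℝ) := by
    simp only [hd]
    push_cast
    rw [show ∀ f g : ℕ → ℝ, (∑ k ∈ Finset.range M, (4:ℝ) ^ k * (f k - g k))
        = (∑ k ∈ Finset.range M, (4:ℝ) ^ k * f k)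
          - (∑ k ∈ Finset.range M, (4:ℝ) ^ k * g k)
      from fun f g => by
        rw [← Finset.sum_sub_distrib]; exact Finset.sum_congr rfl fun k _ => by ring]
    congr 1
    · rw [← Finset.sum_subset (Finset.range_subset_range.mpr (le_max_left (n+1) (n'+1)))
        (fun k hk hk' => by rw [if_neg (fun h => hk' (Finset.mem_range.mpr h)), mul_zero])]
      exact Finset.sum_congr rfl fun k hk => by rw [if_pos (Finset.mem_range.mp hk)]
    · rw [← Finset.sum_subset (Finset.range_subset_range.mpr (le_max_right (n+1) (n'+1)))
        (fun k hk hk' => by rw [if_neg (fun h => hk' (Finset.mem_range.mpr h)), mul_zero])]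
      exact Finset.sum_congr rfl fun k hk => by rw [if_pos (Finset.mem_range.mp hk)]
  have hdval : ∀ k, d k = -1 ∨ d k = 0 ∨ d k = 1 := by
    intro k
    simp only [hd]
    have h1 := ha k
    have h2 := hb k
    split_ifs <;> omega
  have hex : ∃ k < M, d k ≠ 0 := by
    by_contra h
    push_neg at h
    apply hne
    have hz : ∑ k ∈ Finset.range M, (4:ℤ) ^ k * d k = 0 :=
      Finset.sum_eq_zero fun k hk => by rw [h k (Finset.mem_range.mp hk), mul_zero]
    have := hcast
    rw [hz] at this
    push_cast at this
    linarith
  obtain ⟨m, j, hj, hsum⟩ := jp_odd_extract M d hdval hex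
  have ht : (∑ k ∈ Finset.range (n + 1), (4 : ℝ) ^ k * a k)
      - (∑ k ∈ Finset.range (n' + 1), (4 : ℝ) ^ k * b k) = (4 : ℝ) ^ m * j := by
    rw [hcast, hsum]; push_cast; ring
  have hv := jp_vanish μ hμ m j hj _ ht
  rw [← hv]
  apply integral_congr_ae
  filter_upwards with x
  congr 1
  push_cast
  ring
end

section
/- Let μ₃ be the standard middle-third Cantor measure, i.e., the unique Borel probability measure on ℝ with ∫f dμ₃ = ½∫f(x/3)dμ₃ + ½∫f((x+2)/3)dμ₃. Then any set of exponentials {e^{2πiλx} : λ ∈ Λ} that is pairwise orthogonal in L²(μ₃) has at most 3 elements (equivalently, there do not exist 4 real numbers λ₁,λ₂,λ₃,λ₄ with e_{λ_i} pairwise orthogonal in L²(μ₃)). In particular, μ₃ is not a spectral measure. -/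
open MeasureTheory Complex Filter Topology

noncomputable def JPF (μ : Measure ℝ) (t : ℝ) : ℂ :=
  ∫ x, Complex.exp (2 * Real.pi * I * t * x) ∂μ

lemma JPF_step (μ : Measure ℝ)
    (hμ : ∀ f : ℝ → ℂ, Continuous f →
      ∫ x, f x ∂μ = (1/2) * ∫ x, f (x / 3) ∂μ + (1/2) * ∫ x, f ((x + 2) / 3) ∂μ)
    (t : ℝ) :
    JPF μ t = Complex.exp ((2 * Real.pi * t / 3 : ℝ) * I) *
      (Real.cos (2 * Real.pi * t / 3) : ℂ) * JPF μ (t / 3) := by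
  have hc : Continuous fun x : ℝ => Complex.exp (2 * Real.pi * I * t * x) := by
    fun_prop
  have h := hμ _ hc
  have h1 : ∀ x : ℝ, Complex.exp (2 * Real.pi * I * t * ((x / 3 : ℝ) : ℂ)) =
      Complex.exp (2 * Real.pi * I * (t/3 : ℝ) * x) := by
    intro x; push_cast; ring_nf
  have h2 : ∀ x : ℝ, Complex.exp (2 * Real.pi * I * t * (((x + 2) / 3 : ℝ) : ℂ)) =
      Complex.exp (((4 * Real.pi * t / 3 : ℝ) : ℂ) * I) *
        Complex.exp (2 * Real.pi * I * (t/3 : ℝ) * x) := by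
    intro x; rw [← Complex.exp_add]; push_cast; ring_nf
  simp only [h2] at h; simp only [h1] at h
  rw [integral_const_mul] at h
  show (∫ x, Complex.exp (2 * Real.pi * I * t * x) ∂μ) = _
  rw [h]
  show _ = _ * _ * ∫ x, Complex.exp (2 * Real.pi * I * ((t/3 : ℝ) : ℂ) * x) ∂μ
  have key : (1/2 : ℂ) + 1/2 * Complex.exp (((4 * Real.pi * t / 3 : ℝ) : ℂ) * I) =
      Complex.exp (((2 * Real.pi * t / 3 : ℝ) : ℂ) * I) * (Real.cos (2 * Real.pi * t / 3) : ℂ) := by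
    have e1 : ((4 * Real.pi * t / 3 : ℝ) : ℂ) * I =
        ((2 * Real.pi * t / 3 : ℝ) : ℂ) * I + ((2 * Real.pi * t / 3 : ℝ) : ℂ) * I := by
      push_cast; ring
    rw [e1, Complex.exp_add, Complex.exp_mul_I, Complex.ofReal_cos]
    linear_combination (-1/2 : ℂ) * Complex.sin_sq_add_cos_sq ((2 * Real.pi * t / 3 : ℝ) : ℂ) +
      (Complex.sin ((2 * Real.pi * t / 3 : ℝ) : ℂ))^2/2 * Complex.I_sq
  linear_combination (∫ x, Complex.exp (2 * Real.pi * I * ((t/3 : ℝ) : ℂ) * x) ∂μ) * key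

lemma JPF_tendsto (μ : Measure ℝ) [IsProbabilityMeasure μ] (t : ℝ) :
    Tendsto (fun n : ℕ => JPF μ (t / 3 ^ n)) atTop (𝓝 1) := by
  have h0 : Tendsto (fun n : ℕ => (t / 3 ^ n : ℝ)) atTop (𝓝 0) := by
    have := tendsto_pow_atTop_nhds_zero_of_lt_one (by norm_num : (0:ℝ) ≤ 1/3)
      (by norm_num : (1/3 : ℝ) < 1)
    have h := this.const_mul t
    rw [mul_zero] at h
    convert h using 2 with n
    ring_nf
    rw [one_div]
  have key := MeasureTheory.tendsto_integral_of_dominated_convergence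
      (F := fun n x => Complex.exp (2 * Real.pi * I * ((t / 3 ^ n : ℝ) : ℂ) * x))
      (f := fun _ : ℝ => (1 : ℂ)) (bound := fun _ => 1) (μ := μ)
      (fun n => (by fun_prop :
        Continuous fun x : ℝ => Complex.exp (2 * Real.pi * I * ((t / 3 ^ n : ℝ) : ℂ) * x)).aestronglyMeasurable)
      (integrable_const 1)
      (fun n => Filter.Eventually.of_forall fun x => by
        show ‖Complex.exp (2 * Real.pi * I * ((t / 3 ^ n : ℝ) : ℂ) * x)‖ ≤ (1:ℝ)
        have : (2 * (Real.pi:ℂ) * I * ((t / 3 ^ n : ℝ) : ℂ) * x) =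
            ((2 * Real.pi * (t / 3 ^ n) * x : ℝ) : ℂ) * I := by
          push_cast; ring
        rw [this, Complex.norm_exp_ofReal_mul_I])
      (Filter.Eventually.of_forall fun x => by
        have harg : Tendsto (fun n : ℕ => 2 * (Real.pi:ℂ) * I * ((t / 3 ^ n : ℝ) : ℂ) * x)
            atTop (𝓝 0) := by
          have hcast : Tendsto (fun n : ℕ => ((t / 3 ^ n : ℝ) : ℂ)) atTop (𝓝 0) := by
            have h' := (Complex.continuous_ofReal.tendsto 0).comp h0
            rw [Complex.ofReal_zero] at h'
            exact h'
          have := (hcast.const_mul (2 * (Real.pi:ℂ) * I)).mul_const (x : ℂ)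
          simpa using this
        simpa using harg.cexp)
  simpa [JPF] using key

lemma JPF_zero_odd (μ : Measure ℝ) [IsProbabilityMeasure μ]
    (hμ : ∀ f : ℝ → ℂ, Continuous f →
      ∫ x, f x ∂μ = (1/2) * ∫ x, f (x / 3) ∂μ + (1/2) * ∫ x, f ((x + 2) / 3) ∂μ)
    (t : ℝ) (h0 : JPF μ t = 0) : ∃ m : ℤ, Odd m ∧ 4 * t = (m : ℝ) := by
  have hcos : ∃ k : ℕ, Real.cos (2 * Real.pi * (t / 3 ^ k) / 3) = 0 := by
    by_contra hc
    push_neg at hc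
    have hz : ∀ n : ℕ, JPF μ (t / 3 ^ n) = 0 := by
      intro n
      induction n with
      | zero => simpa using h0
      | succ n ih =>
        have hs := JPF_step μ hμ (t / 3 ^ n)
        rw [ih] at hs
        have hexp : Complex.exp ((2 * Real.pi * (t / 3 ^ n) / 3 : ℝ) * I) ≠ 0 :=
          Complex.exp_ne_zero _
        have hcc : ((Real.cos (2 * Real.pi * (t / 3 ^ n) / 3) : ℝ) : ℂ) ≠ 0 := by
          exact_mod_cast hc n
        have : JPF μ (t / 3 ^ n / 3) = 0 := by
          rcases mul_eq_zero.mp hs.symm with h | h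
          · rcases mul_eq_zero.mp h with h' | h'
            · exact absurd h' hexp
            · exact absurd h' hcc
          · exact h
        have harg : t / 3 ^ n / 3 = t / 3 ^ (n + 1) := by
          rw [pow_succ]; ring
        rwa [harg] at this
    have hlim := JPF_tendsto μ t
    have hlim0 : Tendsto (fun n : ℕ => JPF μ (t / 3 ^ n)) atTop (𝓝 0) := by
      simp only [hz]; exact tendsto_const_nhds
    exact one_ne_zero (tendsto_nhds_unique hlim hlim0)
  obtain ⟨k, hk⟩ := hcos
  rw [Real.cos_eq_zero_iff] at hk
  obtain ⟨n, hn⟩ := hk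
  refine ⟨3 ^ (k+1) * (2 * n + 1), ?_, ?_⟩
  · exact (Odd.pow (by decide : Odd (3:ℤ))).mul ⟨n, by ring⟩
  · have h3 : (3:ℝ) ^ k ≠ 0 := by positivity
    have hπ := Real.pi_ne_zero
    have key : (4 * t) * Real.pi = ((3:ℝ) ^ (k+1) * (2 * n + 1)) * Real.pi := by
      field_simp at hn
      linear_combination Real.pi * hn
    have := mul_right_cancel₀ hπ key
    rw [this]; push_cast; ring

/-- Jorgensen–Pedersen: the middle-third Cantor measure admits no 4 pairwise orthogonal
exponentials; in particular it is not a spectral measure. -/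
theorem cantor_measure_no_four_orthogonal_exponentials
    (μ : Measure ℝ) [IsProbabilityMeasure μ]
    (hμ : ∀ f : ℝ → ℂ, Continuous f →
      ∫ x, f x ∂μ = (1/2) * ∫ x, f (x / 3) ∂μ + (1/2) * ∫ x, f ((x + 2) / 3) ∂μ) :
    ¬ ∃ lam : Fin 4 → ℝ, Function.Injective lam ∧
      ∀ i j : Fin 4, i ≠ j →
        ∫ x, Complex.exp (2 * Real.pi * I * (lam i - lam j) * x) ∂μ = 0 := by
  rintro ⟨lam, hinj, horth⟩
  have horthF : ∀ i j : Fin 4, i ≠ j → JPF μ (lam i - lam j) = 0 := by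
    intro i j hij
    have h := horth i j hij
    rw [JPF]
    rw [show (fun x : ℝ => Complex.exp (2 * Real.pi * I * ((lam i - lam j : ℝ) : ℂ) * x)) =
        fun x : ℝ => Complex.exp (2 * Real.pi * I * ((lam i : ℂ) - (lam j : ℂ)) * x) from
      funext fun x => by push_cast; ring_nf]
    exact h
  obtain ⟨m1, hm1, he1⟩ := JPF_zero_odd μ hμ _ (horthF 0 1 (by decide))
  obtain ⟨m2, hm2, he2⟩ := JPF_zero_odd μ hμ _ (horthF 1 2 (by decide))
  obtain ⟨m3, hm3, he3⟩ := JPF_zero_odd μ hμ _ (horthF 0 2 (by decide))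
  have hsum : (m3 : ℝ) = (m1 : ℝ) + (m2 : ℝ) := by
    rw [← he1, ← he2, ← he3]; ring
  have hsum' : m3 = m1 + m2 := by exact_mod_cast hsum
  have : Even m3 := hsum' ▸ hm1.add_odd hm2
  exact Int.not_odd_iff_even.mpr this hm3
end

section
/- Let A ⊆ ℤ be finite and suppose A ⊕ B = ℤ is a tiling of ℤ by translations (every integer has a unique representation a + b with a ∈ A, b ∈ B). Then the tiling is periodic: there exist M ∈ ℕ, M ≥ 1, and a finite set C ⊆ ℤ with B = C ⊕ Mℤ and #A · #C = M. -/
/-- Newman's theorem: every tiling of `ℤ` by a finite set `A` is periodic: `B = C ⊕ Mℤ`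
with `#A · #C = M`. -/
theorem newman_tiling_periodic
    (A : Finset ℤ) (hA : A.Nonempty) (B : Set ℤ)
    (htile : ∀ n : ℤ, ∃! p : ℤ × ℤ, p.1 ∈ A ∧ p.2 ∈ B ∧ p.1 + p.2 = n) :
    ∃ (M : ℕ) (C : Finset ℤ), 0 < M ∧
      B = {x : ℤ | ∃ c ∈ C, ∃ k : ℤ, x = c + (M : ℤ) * k} ∧
      A.card * C.card = M := by
  classical
  have hex : ∀ n : ℤ, ∃ a ∈ A, ∃ b ∈ B, a + b = n := by
    intro n
    obtain ⟨p, ⟨h1, h2, h3⟩, _⟩ := htile n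
    exact ⟨p.1, h1, p.2, h2, h3⟩
  have huniq : ∀ a ∈ A, ∀ a' ∈ A, ∀ b ∈ B, ∀ b' ∈ B, a + b = a' + b' → a = a' ∧ b = b' := by
    intro a ha a' ha' b hb b' hb' h
    obtain ⟨p, -, hu⟩ := htile (a + b)
    have e1 := hu (a, b) ⟨ha, hb, rfl⟩
    have e2 := hu (a', b') ⟨ha', hb', h.symm⟩
    have e : (a, b) = (a', b') := e1.trans e2.symm
    exact ⟨congrArg Prod.fst e, congrArg Prod.snd e⟩
  set m := A.min' hA with hm
  set mx := A.max' hA with hmx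
  have hmA : m ∈ A := A.min'_mem hA
  have hmxA : mx ∈ A := A.max'_mem hA
  have hDnn : 0 ≤ mx - m := by
    have := A.min'_le mx hmxA
    omega
  set D := mx - m with hDdef
  -- forward determination
  have fwd : ∀ y : ℤ, y ∈ B ↔ ∀ a ∈ A, ∀ b ∈ B, a + b = y + m → b = y := by
    intro y
    constructor
    · intro hy a ha b hb hab
      exact (huniq a ha m hmA b hb y hy (by omega)).2
    · intro h
      obtain ⟨a, ha, b, hb, hab⟩ := hex (y + m)
      have hb' := h a ha b hb hab
      rwa [hb'] at hb
  -- backward determination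
  have bwd : ∀ y : ℤ, y ∈ B ↔ ∀ a ∈ A, ∀ b ∈ B, a + b = y + mx → b = y := by
    intro y
    constructor
    · intro hy a ha b hb hab
      exact (huniq a ha mx hmxA b hb y hy (by omega)).2
    · intro h
      obtain ⟨a, ha, b, hb, hab⟩ := hex (y + mx)
      have hb' := h a ha b hb hab
      rwa [hb'] at hb
  -- pigeonhole on windows of length D
  set W := D.toNat with hW
  obtain ⟨x, y, hxy, hfxy⟩ := Finite.exists_ne_map_eq_of_infinite
    (fun n : ℤ => fun i : Fin W => decide ((n + (i : ℤ)) ∈ B))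
  obtain ⟨n1, n2, hlt, hw⟩ : ∃ n1 n2 : ℤ, n1 < n2 ∧
      ∀ i : Fin W, ((n1 + (i : ℤ)) ∈ B ↔ (n2 + (i : ℤ)) ∈ B) := by
    rcases lt_or_gt_of_ne hxy with h | h
    · exact ⟨x, y, h, fun i => decide_eq_decide.mp (congrFun hfxy i)⟩
    · exact ⟨y, x, h, fun i => (decide_eq_decide.mp (congrFun hfxy i)).symm⟩
  set Mz := n2 - n1 with hMzdef
  have hMz : 0 < Mz := by omega
  -- window periodicity
  have Ewin : ∀ n : ℤ, n1 ≤ n → n < n1 + D → (n ∈ B ↔ n + Mz ∈ B) := by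
    intro n h1 h2
    have hiW : (n - n1).toNat < W := by omega
    have := hw ⟨(n - n1).toNat, hiW⟩
    have e1 : n1 + ((⟨(n - n1).toNat, hiW⟩ : Fin W) : ℤ) = n := by
      simp only [Fin.val_mk]
      omega
    have e2 : n2 + ((⟨(n - n1).toNat, hiW⟩ : Fin W) : ℤ) = n + Mz := by
      simp only [Fin.val_mk]
      omega
    rwa [e1, e2] at this
  -- forward propagation step
  have stepF : ∀ y : ℤ, (∀ b : ℤ, y - D ≤ b → b < y → (b ∈ B ↔ b + Mz ∈ B)) →
      (y ∈ B ↔ y + Mz ∈ B) := by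
    intro y hwin
    rw [fwd y, fwd (y + Mz)]
    constructor
    · intro h a ha b hb hab
      have ham := A.min'_le a ha
      have hamx := A.le_max' a ha
      by_cases hby : b - Mz = y
      · omega
      · have hb1 : y - D ≤ b - Mz := by omega
        have hb2 : b - Mz < y := by omega
        have hbB : b - Mz ∈ B := by
          have := hwin (b - Mz) hb1 hb2
          rw [show b - Mz + Mz = b by ring] at this
          exact this.mpr hb
        have := h a ha (b - Mz) hbB (by omega)
        omega
    · intro h a ha b hb hab
      have ham := A.min'_le a ha
      have hamx := A.le_max' a ha
      by_cases hby : b = y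
      · exact hby
      · have hb1 : y - D ≤ b := by omega
        have hb2 : b < y := by omega
        have hbB : b + Mz ∈ B := (hwin b hb1 hb2).mp hb
        have := h a ha (b + Mz) hbB (by omega)
        omega
  -- backward propagation step
  have stepB : ∀ y : ℤ, (∀ b : ℤ, y < b → b ≤ y + D → (b ∈ B ↔ b + Mz ∈ B)) →
      (y ∈ B ↔ y + Mz ∈ B) := by
    intro y hwin
    rw [bwd y, bwd (y + Mz)]
    constructor
    · intro h a ha b hb hab
      have ham := A.min'_le a ha
      have hamx := A.le_max' a ha
      by_cases hby : b - Mz = y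
      · omega
      · have hb1 : y < b - Mz := by omega
        have hb2 : b - Mz ≤ y + D := by omega
        have hbB : b - Mz ∈ B := by
          have := hwin (b - Mz) hb1 hb2
          rw [show b - Mz + Mz = b by ring] at this
          exact this.mpr hb
        have := h a ha (b - Mz) hbB (by omega)
        omega
    · intro h a ha b hb hab
      have ham := A.min'_le a ha
      have hamx := A.le_max' a ha
      by_cases hby : b = y
      · exact hby
      · have hb1 : y < b := by omega
        have hb2 : b ≤ y + D := by omega
        have hbB : b + Mz ∈ B := (hwin b hb1 hb2).mp hb
        have := h a ha (b + Mz) hbB (by omega)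
        omega
  -- full periodicity by two-sided induction
  have key : ∀ k : ℕ, ∀ n : ℤ, n1 - (k : ℤ) ≤ n → n < n1 + D + (k : ℤ) →
      (n ∈ B ↔ n + Mz ∈ B) := by
    intro k
    induction k with
    | zero => intro n h1 h2; exact Ewin n (by omega) (by omega)
    | succ k ih =>
      intro n h1 h2
      rcases lt_or_ge n (n1 - (k : ℤ)) with hc | hc
      · exact stepB n (fun b hb1 hb2 => ih b (by omega) (by omega))
      · rcases lt_or_ge n (n1 + D + (k : ℤ)) with hc2 | hc2
        · exact ih n (by omega) (by omega)
        · exact stepF n (fun b hb1 hb2 => ih b (by omega) (by omega))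
  have Eall : ∀ n : ℤ, n ∈ B ↔ n + Mz ∈ B := by
    intro n
    exact key ((n1 - n).toNat + (n - n1 - D + 1).toNat) n (by omega) (by omega)
  have Emul : ∀ (j : ℤ) (n : ℤ), n ∈ B ↔ n + Mz * j ∈ B := by
    intro j
    induction j using Int.induction_on with
    | zero => simp
    | succ j ih =>
      intro n
      rw [show n + Mz * ((j : ℤ) + 1) = (n + Mz) + Mz * j by ring]
      exact (Eall n).trans (ih (n + Mz))
    | pred j ih =>
      intro n
      rw [show n + Mz * (-(j : ℤ) - 1) = (n - Mz) + Mz * (-(j : ℤ)) by ring]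
      have h1 : n - Mz ∈ B ↔ n ∈ B := by
        have := Eall (n - Mz)
        rwa [show n - Mz + Mz = n by ring] at this
      exact h1.symm.trans (ih (n - Mz))
  set M := Mz.toNat with hMdef
  have hMpos : 0 < M := by omega
  have hMcast : (M : ℤ) = Mz := by omega
  set C := (Finset.Icc (0 : ℤ) (Mz - 1)).filter (· ∈ B) with hCdef
  have hBC : B = {x : ℤ | ∃ c ∈ C, ∃ k : ℤ, x = c + (M : ℤ) * k} := by
    ext x
    simp only [Set.mem_setOf_eq, hCdef, Finset.mem_filter, Finset.mem_Icc]
    constructor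
    · intro hx
      have h0 : 0 ≤ x % Mz := Int.emod_nonneg x (by omega)
      have h1 : x % Mz < Mz := Int.emod_lt_of_pos x hMz
      have hxe : x % Mz + Mz * (x / Mz) = x := Int.emod_add_mul_ediv x Mz
      refine ⟨x % Mz, ⟨⟨h0, by omega⟩, ?_⟩, x / Mz, ?_⟩
      · have := Emul (x / Mz) (x % Mz)
        rw [hxe] at this
        exact this.mpr hx
      · rw [hMcast]; omega
    · rintro ⟨c, ⟨⟨hc0, hc1⟩, hcB⟩, k, rfl⟩
      have := Emul k c
      rw [hMcast]
      exact this.mp hcB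
  have hcard : (A ×ˢ C).card = M := by
    have hIcc : (Finset.Icc (0 : ℤ) (Mz - 1)).card = M := by
      rw [Int.card_Icc]
      omega
    rw [← hIcc]
    apply Finset.card_bij (fun p _ => (p.1 + p.2) % Mz)
    · intro p hp
      rw [Finset.mem_Icc]
      have h0 : 0 ≤ (p.1 + p.2) % Mz := Int.emod_nonneg _ (by omega)
      have h1 : (p.1 + p.2) % Mz < Mz := Int.emod_lt_of_pos _ hMz
      omega
    · intro p hp q hq he
      rw [Finset.mem_product, hCdef, Finset.mem_filter, Finset.mem_Icc] at hp hq
      obtain ⟨hpA, ⟨hp0, hp1⟩, hpB⟩ := hp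
      obtain ⟨hqA, ⟨hq0, hq1⟩, hqB⟩ := hq
      have hdvd : Mz ∣ (p.1 + p.2) - (q.1 + q.2) := by
        exact Int.dvd_of_emod_eq_zero
          (Int.emod_eq_emod_iff_emod_sub_eq_zero.mp he)
      obtain ⟨k, hk⟩ := hdvd
      have hqkB : q.2 + Mz * k ∈ B := (Emul k q.2).mp hqB
      have huq := huniq p.1 hpA q.1 hqA p.2 hpB (q.2 + Mz * k) hqkB (by omega)
      have hk0 : k = 0 := by
        rcases lt_trichotomy k 0 with h | h | h
        · have : Mz * k ≤ Mz * (-1) := by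
            apply mul_le_mul_of_nonneg_left (by omega) (by omega)
          omega
        · exact h
        · have : Mz * 1 ≤ Mz * k := by
            apply mul_le_mul_of_nonneg_left (by omega) (by omega)
          omega
      have h2 := huq.2
      rw [hk0, mul_zero, add_zero] at h2
      exact Prod.ext huq.1 h2
    · intro r hr
      rw [Finset.mem_Icc] at hr
      obtain ⟨a, ha, b, hb, hab⟩ := hex r
      have h0 : 0 ≤ b % Mz := Int.emod_nonneg b (by omega)
      have h1 : b % Mz < Mz := Int.emod_lt_of_pos b hMz
      have hbe : b % Mz + Mz * (b / Mz) = b := Int.emod_add_mul_ediv b Mz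
      have hcB : b % Mz ∈ B := by
        have := Emul (b / Mz) (b % Mz)
        rw [hbe] at this
        exact this.mpr hb
      have hcC : b % Mz ∈ C := by
        rw [hCdef, Finset.mem_filter, Finset.mem_Icc]
        exact ⟨⟨h0, by omega⟩, hcB⟩
      refine ⟨(a, b % Mz), Finset.mem_product.mpr ⟨ha, hcC⟩, ?_⟩
      have : a + b % Mz = r + Mz * (-(b / Mz)) := by rw [mul_neg]; omega
      rw [this, Int.add_mul_emod_self_left, Int.emod_eq_of_lt hr.1 (by omega)]
  refine ⟨M, C, hMpos, hBC, ?_⟩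
  rw [← Finset.card_product]
  exact hcard
end

section
/- Let A ⊆ ℤ be a finite set that tiles ℤ by translations, with mask polynomial A(x) = ∑_{a∈A} x^a. Let S_A be the set of prime powers p^α such that the cyclotomic polynomial Φ_{p^α} divides A(x). Then A(1) = ∏_{s∈S_A} Φ_s(1), i.e., #A = ∏_{p^α ∈ S_A} p (property (T1) of Coven–Meyerowitz). -/
open Polynomial

lemma maskCoeff (F : Finset ℕ) (n : ℕ) :
    (∑ a ∈ F, (X:ℤ[X]) ^ a).coeff n = if n ∈ F then 1 else 0 := by
  rw [finset_sum_coeff]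
  simp only [coeff_X_pow]
  rw [Finset.sum_ite_eq F n (fun _ => (1:ℤ))]

lemma maskPrim (F : Finset ℕ) (hF : F.Nonempty) :
    (∑ a ∈ F, (X:ℤ[X]) ^ a).IsPrimitive := by
  intro r hr
  have h1 : (C r) ∣ _ := hr
  rw [C_dvd_iff_dvd_coeff] at h1
  have := h1 (F.max' hF)
  rw [maskCoeff, if_pos (F.max'_mem hF)] at this
  exact isUnit_of_dvd_one this

lemma maskEval (F : Finset ℕ) : (∑ a ∈ F, (X:ℤ[X]) ^ a).eval 1 = F.card := by
  simp [eval_finset_sum]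

lemma prodCycDvd (F : Finset ℕ) (hF : F.Nonempty) (S' : Finset ℕ)
    (hdvd : ∀ s ∈ S', cyclotomic s ℤ ∣ ∑ a ∈ F, (X:ℤ[X]) ^ a) :
    (∏ s ∈ S', (cyclotomic s ℤ).eval 1) ∣ (F.card : ℤ) := by
  have hmon : (∏ s ∈ S', cyclotomic s ℤ).Monic :=
    monic_prod_of_monic _ _ fun s _ => cyclotomic.monic s ℤ
  have hdvd2 : (∏ s ∈ S', cyclotomic s ℤ) ∣ ∑ a ∈ F, (X:ℤ[X]) ^ a := by
    rw [IsPrimitive.Int.dvd_iff_map_cast_dvd_map_cast _ _ hmon.isPrimitive]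
    rw [Polynomial.map_prod]
    apply Finset.prod_dvd_of_coprime
    · intro i _ j _ hij
      simp only [Function.onFun, map_cyclotomic]
      exact cyclotomic.isCoprime_rat hij
    · intro i _
      rw [map_cyclotomic]
      have := Polynomial.map_dvd (Int.castRingHom ℚ) (hdvd i ‹i ∈ S'›)
      rwa [map_cyclotomic] at this
  have := Polynomial.eval_dvd (x := (1:ℤ)) hdvd2
  rwa [eval_prod, maskEval] at this

section Per
variable {A : Finset ℕ} {hA : A.Nonempty} {B : Set ℤ}

lemma tiling_fwd (A : Finset ℕ) (hA : A.Nonempty) (B : Set ℤ)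
    (htile : ∀ n : ℤ, ∃! p : ℕ × ℤ, p.1 ∈ A ∧ p.2 ∈ B ∧ (p.1 : ℤ) + p.2 = n) (n : ℤ) :
    n ∈ B ↔ ¬ ∃ a ∈ A, ∃ b ∈ B, b < n ∧ (a : ℤ) + b = n + A.min' hA := by
  obtain ⟨p, hp, hu⟩ := htile (n + A.min' hA)
  constructor
  · intro hn
    rintro ⟨a, ha, b, hb, hbn, hab⟩
    have h1 : ((A.min' hA : ℕ), n) = p := hu _ ⟨A.min'_mem hA, hn, by ring⟩
    have h2 : (a, b) = p := hu _ ⟨ha, hb, hab⟩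
    rw [← h1] at h2
    have : b = n := congrArg Prod.snd h2
    omega
  · intro hno
    have hmin : A.min' hA ≤ p.1 := A.min'_le p.1 hp.1
    have hsum := hp.2.2
    have hble : p.2 ≤ n := by omega
    rcases eq_or_lt_of_le hble with h | h
    · rw [← h]; exact hp.2.1
    · exact absurd ⟨p.1, hp.1, p.2, hp.2.1, h, hp.2.2⟩ hno

lemma tiling_bwd (A : Finset ℕ) (hA : A.Nonempty) (B : Set ℤ)
    (htile : ∀ n : ℤ, ∃! p : ℕ × ℤ, p.1 ∈ A ∧ p.2 ∈ B ∧ (p.1 : ℤ) + p.2 = n) (n : ℤ) :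
    n ∈ B ↔ ¬ ∃ a ∈ A, ∃ b ∈ B, n < b ∧ (a : ℤ) + b = n + A.max' hA := by
  obtain ⟨p, hp, hu⟩ := htile (n + A.max' hA)
  constructor
  · intro hn
    rintro ⟨a, ha, b, hb, hbn, hab⟩
    have h1 : ((A.max' hA : ℕ), n) = p := hu _ ⟨A.max'_mem hA, hn, by ring⟩
    have h2 : (a, b) = p := hu _ ⟨ha, hb, hab⟩
    rw [← h1] at h2
    have : b = n := congrArg Prod.snd h2
    omega
  · intro hno
    have hmax : p.1 ≤ A.max' hA := A.le_max' p.1 hp.1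
    have hsum := hp.2.2
    have hble : n ≤ p.2 := by omega
    rcases eq_or_lt_of_le hble with h | h
    · rw [h]; exact hp.2.1
    · exact absurd ⟨p.1, hp.1, p.2, hp.2.1, h, hp.2.2⟩ hno

lemma tiling_periodic (A : Finset ℕ) (hA : A.Nonempty) (B : Set ℤ)
    (htile : ∀ n : ℤ, ∃! p : ℕ × ℤ, p.1 ∈ A ∧ p.2 ∈ B ∧ (p.1 : ℤ) + p.2 = n) : ∃ T : ℕ, 0 < T ∧ ∀ n : ℤ, n ∈ B ↔ n + T ∈ B := by
  classical
  set m := A.min' hA with hm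
  set M := A.max' hA with hM
  set D := M - m with hD
  have hmM : m ≤ M := A.min'_le M (A.max'_mem hA)
  have hDc : (D : ℤ) = (M : ℤ) - m := by omega
  obtain ⟨j1', j2', hne, heq⟩ := Fintype.exists_ne_map_eq_of_card_lt
    (fun j : Fin (2 ^ D + 1) => fun i : Fin D => decide (((j : ℤ) + (i : ℤ)) ∈ B))
    (by simp)
  -- wlog j1 < j2
  obtain ⟨j1, j2, hlt, hbase⟩ :
      ∃ j1 j2 : ℕ, j1 < j2 ∧ ∀ i : ℕ, i < D → (((j1 : ℤ) + i) ∈ B ↔ ((j2 : ℤ) + i) ∈ B) := by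
    rcases (Fin.val_ne_iff.mpr hne).lt_or_gt with h | h
    · exact ⟨j1', j2', h, fun i hi => by
        have := congrFun heq ⟨i, hi⟩
        simpa [decide_eq_decide] using this⟩
    · exact ⟨j2', j1', h, fun i hi => by
        have := congrFun heq ⟨i, hi⟩
        simpa [decide_eq_decide] using this.symm⟩
  set t : ℕ := j2 - j1 with htdef
  have ht : 0 < t := by omega
  have hj2 : (j2 : ℤ) = (j1 : ℤ) + t := by omega
  -- one-step extension lemmas
  have step_up : ∀ n : ℤ, (∀ b : ℤ, n - D ≤ b → b < n → (b ∈ B ↔ b + t ∈ B)) →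
      (n ∈ B ↔ n + t ∈ B) := by
    intro n ih
    rw [tiling_fwd A hA B htile n, tiling_fwd A hA B htile (n + t)]
    apply not_congr
    constructor
    · rintro ⟨a, ha, b, hb, hbn, hab⟩
      have haM : (a : ℤ) ≤ M := by exact_mod_cast A.le_max' a ha
      refine ⟨a, ha, b + t, ?_, by omega, by omega⟩
      exact (ih b (by omega) hbn).mp hb
    · rintro ⟨a, ha, b', hb', hbn', hab'⟩
      have haM : (a : ℤ) ≤ M := by exact_mod_cast A.le_max' a ha
      refine ⟨a, ha, b' - t, ?_, by omega, by omega⟩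
      exact (ih (b' - t) (by omega) (by omega)).mpr (by simpa using hb')
  have step_down : ∀ n : ℤ, (∀ b : ℤ, n < b → b ≤ n + D → (b ∈ B ↔ b + t ∈ B)) →
      (n ∈ B ↔ n + t ∈ B) := by
    intro n ih
    rw [tiling_bwd A hA B htile n, tiling_bwd A hA B htile (n + t)]
    apply not_congr
    constructor
    · rintro ⟨a, ha, b, hb, hbn, hab⟩
      have ham : (m : ℤ) ≤ a := by exact_mod_cast A.min'_le a ha
      refine ⟨a, ha, b + t, ?_, by omega, by omega⟩
      exact (ih b hbn (by omega)).mp hb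
    · rintro ⟨a, ha, b', hb', hbn', hab'⟩
      have ham : (m : ℤ) ≤ a := by exact_mod_cast A.min'_le a ha
      refine ⟨a, ha, b' - t, ?_, by omega, by omega⟩
      exact (ih (b' - t) (by omega) (by omega)).mpr (by simpa using hb')
  -- upward induction
  have up : ∀ k : ℕ, ((j1 : ℤ) + k ∈ B ↔ (j1 : ℤ) + k + t ∈ B) := by
    intro k
    induction k using Nat.strong_induction_on with
    | _ k ih =>
      by_cases hk : k < D
      · have h0 := hbase k hk
        rw [hj2, add_right_comm ((j1:ℤ)) ((t:ℤ)) ((k:ℤ))] at h0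
        exact h0
      · apply step_up
        intro b hb1 hb2
        have hbge : (j1 : ℤ) ≤ b := by omega
        have hbk : b = (j1 : ℤ) + (b - j1).toNat := by omega
        rw [hbk]
        exact ih (b - j1).toNat (by omega)
  have up' : ∀ n : ℤ, (j1 : ℤ) ≤ n → (n ∈ B ↔ n + t ∈ B) := by
    intro n h
    have hn : n = (j1 : ℤ) + (n - j1).toNat := by omega
    rw [hn]; exact up _
  have all : ∀ k : ℕ, ∀ n : ℤ, n = (j1 : ℤ) - k → (n ∈ B ↔ n + t ∈ B) := by
    intro k
    induction k using Nat.strong_induction_on with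
    | _ k ih =>
      intro n hn
      by_cases h : (j1 : ℤ) ≤ n
      · exact up' n h
      · apply step_down
        intro b hb1 hb2
        by_cases hb : (j1 : ℤ) ≤ b
        · exact up' b hb
        · exact ih (j1 - b).toNat (by omega) b (by omega)
  refine ⟨t, ht, fun n => ?_⟩
  by_cases h : (j1 : ℤ) ≤ n
  · exact up' n h
  · exact all (j1 - n).toNat n (by omega)

end Per

/-- Coven–Meyerowitz (T) ⟹ (T1): if a finite `A ⊆ ℕ` tiles `ℤ` by translations, with mask
polynomial `A(x) = ∑_{a∈A} x^a`, and `S_A` is the set of prime powers `p^α` with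
`Φ_{p^α} ∣ A(x)`, then `A(1) = #A = ∏_{s ∈ S_A} Φ_s(1)`. -/
theorem coven_meyerowitz_T1
    (A : Finset ℕ) (hA : A.Nonempty) (B : Set ℤ)
    (htile : ∀ n : ℤ, ∃! p : ℕ × ℤ, p.1 ∈ A ∧ p.2 ∈ B ∧ (p.1 : ℤ) + p.2 = n)
    (P : ℤ[X]) (hP : P = ∑ a ∈ A, X ^ a)
    (S : Finset ℕ) (hS : ∀ s : ℕ, s ∈ S ↔ IsPrimePow s ∧ cyclotomic s ℤ ∣ P) :
    (A.card : ℤ) = ∏ s ∈ S, (cyclotomic s ℤ).eval 1 := by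
  classical
  obtain ⟨T, hT, hper⟩ := tiling_periodic A hA B htile
  have hTZ : (0:ℤ) < T := by exact_mod_cast hT
  have perZ : ∀ (n k : ℤ), n ∈ B ↔ n + T * k ∈ B := by
    intro n k
    induction k using Int.induction_on with
    | zero => simp
    | succ i ih =>
        rw [show n + (T:ℤ) * (i+1) = (n + T*i) + T by ring]
        exact ih.trans (hper _)
    | pred i ih =>
        rw [show n + (T:ℤ) * (-i-1) = (n + T*(-i)) - T by ring]
        have h2 := hper (n + (T:ℤ)*(-i) - T)
        rw [show n + (T:ℤ)*(-i) - T + T = n + T*(-i) by ring] at h2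
        exact ih.trans h2.symm
  set B0 : Finset ℕ := (Finset.range T).filter (fun b => (b:ℤ) ∈ B) with hB0
  have key : ∀ n : ℤ, ∃! p : ℕ × ℕ,
      (p.1 ∈ A ∧ p.2 ∈ B0) ∧ (T:ℤ) ∣ ((p.1:ℤ) + p.2 - n) := by
    intro n
    obtain ⟨⟨a, b⟩, ⟨ha, hb, hab⟩, hu⟩ := htile n
    simp only at ha hb hab hu
    set r : ℤ := b % T with hr
    have hr0 : 0 ≤ r := Int.emod_nonneg b (by positivity)
    have hrT : r < T := Int.emod_lt_of_pos b hTZ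
    have hde := Int.mul_ediv_add_emod b (T:ℤ)
    have hrB : r ∈ B := by
      have h3 := perZ r (b / T)
      rw [show r + (T:ℤ) * (b / T) = b by linarith] at h3
      exact h3.mpr hb
    have hrt : ((r.toNat : ℕ) : ℤ) = r := Int.toNat_of_nonneg hr0
    refine ⟨(a, r.toNat), ⟨⟨ha, ?_⟩, ?_⟩, ?_⟩
    · simp only [hB0, Finset.mem_filter, Finset.mem_range]
      refine ⟨by omega, ?_⟩
      rw [hrt]; exact hrB
    · exact ⟨-(b / T), by push_cast [hrt]; linarith⟩
    · rintro ⟨a', b0'⟩ ⟨⟨ha', hb0'⟩, hdvd'⟩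
      simp only [hB0, Finset.mem_filter, Finset.mem_range] at hb0'
      obtain ⟨k, hk⟩ := hdvd'
      simp only at hk
      have hb'B : (n - a' : ℤ) ∈ B := by
        have h4 := perZ (b0' : ℤ) (-k)
        rw [show (b0':ℤ) + T * (-k) = n - a' by linarith] at h4
        exact h4.mp hb0'.2
      have h5 := hu (a', n - a') ⟨ha', hb'B, by ring⟩
      have haa : a' = a := congrArg Prod.fst h5
      have hbb : n - (a':ℤ) = b := congrArg Prod.snd h5
      have hd2 : (T:ℤ) ∣ ((b0' : ℤ) - r) := ⟨b / T + k, by linarith⟩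
      have hbr : (b0' : ℤ) = r := by
        have h6 := Int.eq_zero_of_abs_lt_dvd hd2 (by rw [abs_lt]; constructor <;> omega)
        omega
      have : b0' = r.toNat := by omega
      simp [haa, this]
  -- bijection components
  have hmaps : ∀ p : ℕ × ℕ, p ∈ A ×ˢ B0 → (p.1 + p.2) % T ∈ Finset.range T :=
    fun p _ => Finset.mem_range.mpr (Nat.mod_lt _ hT)
  have hmodkey : ∀ (u n : ℕ), n < T → ((T:ℤ) ∣ ((u:ℤ) - n)) → u % T = n := by
    intro u n hn hd
    obtain ⟨c, hc⟩ := hd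
    have hc0 : 0 ≤ c := by
      by_contra h
      push_neg at h
      have h1 : c ≤ -1 := by omega
      have h2 : (T:ℤ) * c ≤ (T:ℤ) * (-1) := by
        apply mul_le_mul_of_nonneg_left h1 (le_of_lt hTZ)
      have h3 : (0:ℤ) ≤ u := Int.natCast_nonneg u
      have h4 : (n:ℤ) < T := by exact_mod_cast hn
      linarith
    have hcc : ((c.toNat : ℕ) : ℤ) = c := Int.toNat_of_nonneg hc0
    have hu2 : (u:ℤ) = ((n + T * c.toNat : ℕ) : ℤ) := by push_cast [hcc]; linarith
    have hu3 : u = n + T * c.toNat := by exact_mod_cast hu2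
    rw [hu3, Nat.add_mul_mod_self_left, Nat.mod_eq_of_lt hn]
  have hself : ∀ u : ℕ, (T:ℤ) ∣ ((u:ℤ) - ((u % T : ℕ) : ℤ)) := by
    intro u
    refine ⟨(u / T : ℕ), ?_⟩
    have h := Nat.div_add_mod u T
    have h2 : ((T:ℤ) * ((u / T : ℕ) : ℤ) + ((u % T : ℕ) : ℤ)) = (u : ℤ) := by
      exact_mod_cast congrArg (Nat.cast : ℕ → ℤ) h
    linarith
  have hinj : ∀ (p : ℕ × ℕ) (hp : p ∈ A ×ˢ B0) (p' : ℕ × ℕ) (hp' : p' ∈ A ×ˢ B0),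
      (p.1 + p.2) % T = (p'.1 + p'.2) % T → p = p' := by
    intro p hp p' hp' he
    rw [Finset.mem_product] at hp hp'
    obtain ⟨q, hq, huq⟩ := key ((((p.1 + p.2) % T : ℕ)) : ℤ)
    have e1 : p = q := huq p ⟨hp, by
      have := hself (p.1 + p.2)
      push_cast at this ⊢
      convert this using 2⟩
    have e2 : p' = q := huq p' ⟨hp', by
      have := hself (p'.1 + p'.2)
      rw [← he] at this
      push_cast at this ⊢
      convert this using 2⟩
    rw [e1, e2]
  have hsurj : ∀ n ∈ Finset.range T, ∃ p, ∃ hp : p ∈ A ×ˢ B0, (p.1 + p.2) % T = n := by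
    intro n hn
    rw [Finset.mem_range] at hn
    obtain ⟨q, ⟨⟨hq1, hq2⟩, hqd⟩, _⟩ := key (n:ℤ)
    refine ⟨q, Finset.mem_product.mpr ⟨hq1, hq2⟩, hmodkey (q.1 + q.2) n hn ?_⟩
    push_cast at hqd ⊢
    convert hqd using 2
  have hcard : A.card * B0.card = T := by
    have := Finset.card_bij (fun (p : ℕ × ℕ) (_ : p ∈ A ×ˢ B0) => (p.1 + p.2) % T)
      hmaps hinj hsurj
    simpa [Finset.card_product, Finset.card_range] using this
  set Q : ℤ[X] := ∑ b ∈ B0, (X:ℤ[X]) ^ b with hQ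
  have hsum_eq : ∑ p ∈ A ×ˢ B0, (X:ℤ[X]) ^ ((p.1 + p.2) % T)
      = ∑ i ∈ Finset.range T, (X:ℤ[X]) ^ i :=
    Finset.sum_bij (fun (p : ℕ × ℕ) (_ : p ∈ A ×ˢ B0) => (p.1 + p.2) % T)
      hmaps hinj hsurj (fun p hp => rfl)
  have hPQ : P * Q = ∑ p ∈ A ×ˢ B0, (X:ℤ[X]) ^ (p.1 + p.2) := by
    rw [hP, hQ, Finset.sum_mul_sum, ← Finset.sum_product']
    exact Finset.sum_congr rfl fun p _ => (pow_add X p.1 p.2).symm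
  have hdiff : ((X:ℤ[X]) ^ T - 1) ∣ (P * Q - ∑ i ∈ Finset.range T, X ^ i) := by
    rw [hPQ, ← hsum_eq, ← Finset.sum_sub_distrib]
    apply Finset.dvd_sum
    intro p _
    set u := p.1 + p.2 with hu
    have hX : (X:ℤ[X]) ^ u = X ^ (u % T) * (X ^ T) ^ (u / T) := by
      rw [← pow_mul, ← pow_add, Nat.mod_add_div]
    rw [hX]
    have h1 : ((X:ℤ[X]) ^ T - 1) ∣ ((X ^ T) ^ (u / T) - 1) := by
      have := sub_dvd_pow_sub_pow ((X:ℤ[X]) ^ T) 1 (u / T)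
      simpa using this
    have h2 : (X:ℤ[X]) ^ (u % T) * (X ^ T) ^ (u / T) - X ^ (u % T)
        = X ^ (u % T) * ((X ^ T) ^ (u / T) - 1) := by ring
    rw [h2]
    exact Dvd.dvd.mul_left h1 _
  have geomDvd : ∀ s ∈ T.divisors.erase 1, cyclotomic s ℤ ∣ P * Q := by
    intro s hs
    have h1 : cyclotomic s ℤ ∣ ∑ i ∈ Finset.range T, (X:ℤ[X]) ^ i := by
      rw [← prod_cyclotomic_eq_geom_sum hT ℤ]
      exact Finset.dvd_prod_of_mem _ hs
    have h2 : cyclotomic s ℤ ∣ ((X:ℤ[X]) ^ T - 1) := by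
      rw [← prod_cyclotomic_eq_X_pow_sub_one hT ℤ]
      exact Finset.dvd_prod_of_mem _ (Finset.mem_of_mem_erase hs)
    have h3 := dvd_add (h2.trans hdiff) h1
    rwa [sub_add_cancel] at h3
  have hprime : ∀ s : ℕ, 0 < s → Prime (cyclotomic s ℤ) := fun s hs =>
    UniqueFactorizationMonoid.irreducible_iff_prime.mp (cyclotomic.irreducible hs)
  have Epp : ∀ s : ℕ, IsPrimePow s → ∃ p : ℕ, p.Prime ∧ (cyclotomic s ℤ).eval 1 = p := by
    intro s hs
    obtain ⟨p, k, hp, hk, rfl⟩ := hs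
    haveI := Fact.mk hp.nat_prime
    refine ⟨p, hp.nat_prime, ?_⟩
    have hk1 : k = (k - 1) + 1 := by omega
    rw [hk1, eval_one_cyclotomic_prime_pow]
  have Epos : ∀ s : ℕ, IsPrimePow s → 0 < (cyclotomic s ℤ).eval 1 := by
    intro s hs
    obtain ⟨p, hp, he⟩ := Epp s hs
    rw [he]
    exact_mod_cast hp.pos
  set SB : Finset ℕ :=
    (T.divisors.erase 1).filter (fun s => IsPrimePow s ∧ cyclotomic s ℤ ∣ Q) with hSB
  set PP : Finset ℕ := (T.divisors.erase 1).filter IsPrimePow with hPP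
  have hTval : (T:ℤ) = ∏ s ∈ T.divisors.erase 1, (cyclotomic s ℤ).eval 1 := by
    have h := congrArg (eval (1:ℤ)) (prod_cyclotomic_eq_geom_sum hT ℤ)
    rw [eval_prod] at h
    simp only [eval_finset_sum, eval_pow, eval_X, one_pow, Finset.sum_const,
      Finset.card_range, nsmul_eq_mul, mul_one] at h
    exact h.symm
  have hPPval : (T:ℤ) = ∏ s ∈ PP, (cyclotomic s ℤ).eval 1 := by
    rw [hTval, ← Finset.prod_filter_mul_prod_filter_not (T.divisors.erase 1) IsPrimePow
      (fun s => (cyclotomic s ℤ).eval 1)]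
    have hone : ∏ s ∈ (T.divisors.erase 1).filter (fun s => ¬ IsPrimePow s),
        (cyclotomic s ℤ).eval 1 = 1 := by
      apply Finset.prod_eq_one
      intro s hs
      simp only [Finset.mem_filter, Finset.mem_erase] at hs
      apply eval_one_cyclotomic_not_prime_pow
      intro p hp k hpk
      rcases Nat.eq_zero_or_pos k with rfl | hk
      · exact hs.1.1 (by simpa using hpk.symm)
      · exact hs.2 ⟨p, k, hp.prime, hk, hpk⟩
    rw [hone, mul_one, hPP]
  have cover : PP ⊆ S ∪ SB := by
    intro s hsPP
    rw [hPP, Finset.mem_filter] at hsPP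
    obtain ⟨hsd, hspp⟩ := hsPP
    have hpos : 0 < s := Nat.pos_of_mem_divisors (Finset.mem_of_mem_erase hsd)
    rcases (hprime s hpos).2.2 P Q (geomDvd s hsd) with h | h
    · exact Finset.mem_union_left _ ((hS s).mpr ⟨hspp, h⟩)
    · exact Finset.mem_union_right _ (Finset.mem_filter.mpr ⟨hsd, hspp, h⟩)
  have hB0ne : B0.Nonempty := by
    rw [← Finset.card_pos]
    rcases Nat.eq_zero_or_pos B0.card with h | h
    · rw [h, mul_zero] at hcard; omega
    · exact h
  have dS : (∏ s ∈ S, (cyclotomic s ℤ).eval 1) ∣ (A.card : ℤ) := by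
    apply prodCycDvd A hA S
    intro s hs
    have := ((hS s).mp hs).2
    rwa [hP] at this
  have dB : (∏ s ∈ SB, (cyclotomic s ℤ).eval 1) ∣ (B0.card : ℤ) := by
    apply prodCycDvd B0 hB0ne SB
    intro s hs
    rw [hSB, Finset.mem_filter] at hs
    exact hs.2.2
  have PSpos : 0 < ∏ s ∈ S, (cyclotomic s ℤ).eval 1 :=
    Finset.prod_pos fun s hs => Epos s ((hS s).mp hs).1
  have SBpos : 0 < ∏ s ∈ SB, (cyclotomic s ℤ).eval 1 :=
    Finset.prod_pos fun s hs => Epos s (by rw [hSB, Finset.mem_filter] at hs; exact hs.2.1)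
  have h1 : (T:ℤ) ∣ (∏ s ∈ S, (cyclotomic s ℤ).eval 1) * ∏ s ∈ SB, (cyclotomic s ℤ).eval 1 := by
    rw [hPPval]
    calc (∏ s ∈ PP, (cyclotomic s ℤ).eval 1)
        ∣ ∏ s ∈ S ∪ SB, (cyclotomic s ℤ).eval 1 :=
          Finset.prod_dvd_prod_of_subset PP (S ∪ SB) _ cover
      _ ∣ (∏ s ∈ S, (cyclotomic s ℤ).eval 1) * ∏ s ∈ SB, (cyclotomic s ℤ).eval 1 :=
          ⟨∏ s ∈ S ∩ SB, (cyclotomic s ℤ).eval 1, (Finset.prod_union_inter).symm⟩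
  have h2 : ((∏ s ∈ S, (cyclotomic s ℤ).eval 1) * ∏ s ∈ SB, (cyclotomic s ℤ).eval 1)
      ∣ (T:ℤ) := by
    have hc : ((A.card : ℤ)) * (B0.card : ℤ) = (T:ℤ) := by exact_mod_cast hcard
    rw [← hc]
    exact mul_dvd_mul dS dB
  have heq : ((∏ s ∈ S, (cyclotomic s ℤ).eval 1) * ∏ s ∈ SB, (cyclotomic s ℤ).eval 1)
      = (T:ℤ) :=
    Int.dvd_antisymm (le_of_lt (mul_pos PSpos SBpos)) (le_of_lt hTZ) h2 h1
  obtain ⟨a, haeq⟩ := dS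
  obtain ⟨b, hbeq⟩ := dB
  have hcZ : ((A.card : ℤ)) * (B0.card : ℤ) = (T:ℤ) := by exact_mod_cast hcard
  have hab : a * b = 1 := by
    have hne : ((∏ s ∈ S, (cyclotomic s ℤ).eval 1) * ∏ s ∈ SB, (cyclotomic s ℤ).eval 1)
        ≠ 0 := ne_of_gt (mul_pos PSpos SBpos)
    apply mul_left_cancel₀ hne
    rw [mul_one]
    calc ((∏ s ∈ S, (cyclotomic s ℤ).eval 1) * ∏ s ∈ SB, (cyclotomic s ℤ).eval 1) * (a * b)
        = ((∏ s ∈ S, (cyclotomic s ℤ).eval 1) * a)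
          * ((∏ s ∈ SB, (cyclotomic s ℤ).eval 1) * b) := by ring
      _ = (A.card : ℤ) * (B0.card : ℤ) := by rw [← haeq, ← hbeq]
      _ = (T:ℤ) := hcZ
      _ = _ := heq.symm
  have ha0 : 0 < a := by
    rcases lt_trichotomy a 0 with h | h | h
    · exfalso
      have hA0 : (0:ℤ) < A.card := by exact_mod_cast hA.card_pos
      nlinarith [PSpos, haeq]
    · exfalso
      have hA0 : (0:ℤ) < A.card := by exact_mod_cast hA.card_pos
      rw [h, mul_zero] at haeq
      omega
    · exact h
  have ha1 : a = 1 := by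
    have hd : a ∣ 1 := ⟨b, hab.symm⟩
    rcases Int.isUnit_iff.mp (isUnit_of_dvd_one hd) with h | h
    · exact h
    · omega
  rw [haeq, ha1, mul_one]
end

section
/- Let N ∈ ℕ, N ≥ 1, and let A, B ⊆ ℤ/Nℤ with A ⊕ B = ℤ/Nℤ (every element of ℤ/Nℤ is uniquely a + b, a ∈ A, b ∈ B). If #A is a prime power p^k, then A is a spectral set in ℤ/Nℤ: there exists Λ ⊆ ℤ/Nℤ with #Λ = #A such that the characters χ_λ(a) = e^{2πiλa/N}, λ ∈ Λ, restricted to A form an orthogonal basis of functions on A. -/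
open Complex Polynomial Finset

lemma pow_mod_eq {ζ : ℂ} {N : ℕ} (h1 : ζ ^ N = 1) (n : ℕ) : ζ ^ (n % N) = ζ ^ n := by
  conv_rhs => rw [← Nat.mod_add_div n N]
  rw [pow_add, pow_mul, h1, one_pow, mul_one]

lemma prim_mul {p a b : ℕ} (hp : p.Prime) (hab : a < b) {z w : ℂ}
    (hz : IsPrimitiveRoot z (p ^ a)) (hw : IsPrimitiveRoot w (p ^ b)) :
    IsPrimitiveRoot (z * w) (p ^ b) := by
  have hoz : orderOf z = p ^ a := hz.eq_orderOf.symm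
  have how : orderOf w = p ^ b := hw.eq_orderOf.symm
  have h1 : (z * w) ^ p ^ b = 1 := by
    rw [mul_pow, hw.pow_eq_one, mul_one]
    exact orderOf_dvd_iff_pow_eq_one.mp (hoz ▸ pow_dvd_pow p hab.le)
  have hdvd : orderOf (z * w) ∣ p ^ b := orderOf_dvd_of_pow_eq_one h1
  obtain ⟨c, hc, hco⟩ := (Nat.dvd_prime_pow hp).mp hdvd
  have hz1 : z ^ p ^ (b - 1) = 1 :=
    orderOf_dvd_iff_pow_eq_one.mp (hoz ▸ pow_dvd_pow p (by omega))
  have hne : (z * w) ^ p ^ (b - 1) ≠ 1 := by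
    rw [mul_pow, hz1, one_mul]
    intro h
    have := orderOf_dvd_of_pow_eq_one h
    rw [how] at this
    exact absurd ((Nat.pow_dvd_pow_iff_le_right hp.one_lt).mp this) (by omega)
  have hcb : c = b := by
    by_contra hcb
    exact hne (orderOf_dvd_iff_pow_eq_one.mp (hco ▸ pow_dvd_pow p (by omega)))
  have : orderOf (z * w) = p ^ b := by rw [hco, hcb]
  exact this ▸ IsPrimitiveRoot.orderOf (z * w)

lemma exists_spectrum (N : ℕ) [NeZero N] (p : ℕ) (hp : p.Prime) (T : Finset ℕ)
    (hT : ∀ α ∈ T, 1 ≤ α ∧ p ^ α ∣ N) :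
    ∃ Λ : Finset (ZMod N), Λ.card = p ^ T.card ∧
      ∀ l ∈ Λ, ∀ l' ∈ Λ, l ≠ l' → ∃ α ∈ T,
        IsPrimitiveRoot (Complex.exp (2 * Real.pi * I / N) ^ (l - l').val) (p ^ α) := by
  classical
  set ζ : ℂ := Complex.exp (2 * Real.pi * I / N) with hζdef
  have hζ : IsPrimitiveRoot ζ N := Complex.isPrimitiveRoot_exp N (NeZero.ne N)
  have hζ1 : ζ ^ N = 1 := hζ.pow_eq_one
  have chi_add : ∀ x y : ZMod N, ζ ^ (x + y).val = ζ ^ x.val * ζ ^ y.val := by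
    intro x y; rw [ZMod.val_add, pow_mod_eq hζ1, pow_add]
  have chi_nat : ∀ n : ℕ, ζ ^ ((n : ZMod N)).val = ζ ^ n := by
    intro n; rw [ZMod.val_natCast, pow_mod_eq hζ1]
  have symm_helper : ∀ x y : ZMod N, ζ ^ (y - x).val = (ζ ^ (x - y).val)⁻¹ := by
    intro x y
    have h : ζ ^ (x - y).val * ζ ^ (y - x).val = 1 := by
      rw [← chi_add]
      simp
    exact (eq_inv_of_mul_eq_one_left (by rw [mul_comm] at h; exact h)).symm ▸
      (eq_inv_of_mul_eq_one_right h ▸ rfl)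
  induction T using Finset.induction_on_max with
  | empty => exact ⟨{0}, by simp, by simp⟩
  | insert α0 T' hmax ih =>
    obtain ⟨Λ', hcard', hdiff'⟩ := ih fun β hβ => hT β (mem_insert_of_mem hβ)
    obtain ⟨hα01, hα0dvd⟩ := hT α0 (mem_insert_self _ _)
    set q : ℕ := N / p ^ α0 with hq
    have hqmul : N = q * p ^ α0 := (Nat.div_mul_cancel hα0dvd).symm
    set w : ℂ := ζ ^ q with hwdef
    have hw : IsPrimitiveRoot w (p ^ α0) :=
      hζ.pow (Nat.pos_of_ne_zero (NeZero.ne N)) hqmul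
    set f : ZMod N × ℕ → ZMod N := fun x => x.1 + ((x.2 * q : ℕ) : ZMod N) with hf
    have key : ∀ l1 ∈ Λ', ∀ l2 ∈ Λ', ∀ c1 < p, ∀ c2 < p,
        (l1, c1) ≠ (l2, c2) → ∃ α ∈ insert α0 T',
        IsPrimitiveRoot (ζ ^ (f (l1, c1) - f (l2, c2)).val) (p ^ α) := by
      have asym : ∀ l1 ∈ Λ', ∀ l2 ∈ Λ', ∀ c1 c2 : ℕ, c1 < p → c2 ≤ c1 →
          (l1, c1) ≠ (l2, c2) → ∃ α ∈ insert α0 T',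
          IsPrimitiveRoot (ζ ^ (f (l1, c1) - f (l2, c2)).val) (p ^ α) := by
        intro l1 h1 l2 h2 c1 c2 hc1 hc21 hne
        have hdiff : f (l1, c1) - f (l2, c2) = (l1 - l2) + (((c1 - c2) * q : ℕ) : ZMod N) := by
          simp only [hf]
          push_cast [Nat.cast_sub hc21]
          ring
        have hval : ζ ^ (f (l1, c1) - f (l2, c2)).val
            = ζ ^ (l1 - l2).val * w ^ (c1 - c2) := by
          rw [hdiff, chi_add, chi_nat, mul_comm (c1 - c2) q, pow_mul]
        rcases Nat.eq_zero_or_pos (c1 - c2) with hc0 | hcpos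
        · have hceq : c1 = c2 := by omega
          have hl : l1 ≠ l2 := by
            intro h; exact hne (by rw [h, hceq])
          obtain ⟨α, hα, hz⟩ := hdiff' l1 h1 l2 h2 hl
          exact ⟨α, mem_insert_of_mem hα, by rwa [hval, hc0, pow_zero, mul_one]⟩
        · have hcop : (c1 - c2).Coprime (p ^ α0) :=
            Nat.Coprime.pow_right _
              ((hp.coprime_iff_not_dvd.mpr (Nat.not_dvd_of_pos_of_lt hcpos (by omega))).symm)
          have hwc : IsPrimitiveRoot (w ^ (c1 - c2)) (p ^ α0) :=
            hw.pow_of_coprime _ hcop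
          rcases eq_or_ne l1 l2 with rfl | hl
          · refine ⟨α0, mem_insert_self _ _, ?_⟩
            rw [hval, sub_self, ZMod.val_zero, pow_zero, one_mul]
            exact hwc
          · obtain ⟨α, hα, hz⟩ := hdiff' l1 h1 l2 h2 hl
            refine ⟨α0, mem_insert_self _ _, ?_⟩
            rw [hval]
            exact prim_mul hp (hmax α hα) hz hwc
      intro l1 h1 l2 h2 c1 hc1 c2 hc2 hne
      rcases le_total c2 c1 with h | h
      · exact asym l1 h1 l2 h2 c1 c2 hc1 h hne
      · obtain ⟨α, hα, hprim⟩ := asym l2 h2 l1 h1 c2 c1 hc2 h (Ne.symm hne)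
        exact ⟨α, hα, by rw [symm_helper]; exact hprim.inv⟩
    have hone : ∀ α ∈ insert α0 T', (1:ℕ) ≤ α := fun α hα => (hT α hα).1
    have hinj : Set.InjOn f ↑(Λ' ×ˢ range p) := by
      intro x hx y hy hxy
      by_contra hne
      simp only [Finset.coe_product, Set.mem_prod, mem_coe, mem_range] at hx hy
      obtain ⟨α, hα, hprim⟩ := key x.1 hx.1 y.1 hy.1 x.2 hx.2 y.2 hy.2
        (by rwa [Prod.mk.eta, Prod.mk.eta])
      rw [hxy, sub_self, ZMod.val_zero, pow_zero] at hprim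
      have h1 : p ^ α = 1 := hprim.unique IsPrimitiveRoot.one
      have hα1 : 1 ≤ α := hone α hα
      exact absurd h1 (Nat.one_lt_pow (by omega) hp.one_lt).ne'
    refine ⟨(Λ' ×ˢ range p).image f, ?_, ?_⟩
    · rw [Finset.card_image_of_injOn hinj, card_product, card_range, hcard',
        card_insert_of_notMem (fun h => lt_irrefl α0 (hmax α0 h)), pow_succ]
    · intro l hl l' hl' hne
      obtain ⟨x, hx, rfl⟩ := mem_image.mp hl
      obtain ⟨y, hy, rfl⟩ := mem_image.mp hl'
      simp only [mem_product, mem_range] at hx hy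
      exact key x.1 hx.1 y.1 hy.1 x.2 hx.2 y.2 hy.2
        (by rintro h; exact hne (by rw [Prod.mk.eta, Prod.mk.eta] at h; rw [h]))

lemma prod_cyclotomic_dvd {p : ℕ} (hp : p.Prime) (f : Polynomial ℤ) (s : Finset ℕ)
    (hdvd : ∀ α ∈ s, cyclotomic (p ^ α) ℤ ∣ f) :
    (∏ α ∈ s, cyclotomic (p ^ α) ℤ) ∣ f := by
  classical
  induction s using Finset.induction_on with
  | empty => simpa using one_dvd f
  | @insert a s ha ih =>
    have hq : Prime (cyclotomic (p ^ a) ℤ) :=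
      UniqueFactorizationMonoid.irreducible_iff_prime.mp
        (cyclotomic.irreducible (pow_pos hp.pos a))
    obtain ⟨t, ht⟩ := ih fun α hα => hdvd α (mem_insert_of_mem hα)
    have hqf : cyclotomic (p ^ a) ℤ ∣ (∏ α ∈ s, cyclotomic (p ^ α) ℤ) * t := by
      rw [← ht]; exact hdvd a (mem_insert_self _ _)
    have hqt : cyclotomic (p ^ a) ℤ ∣ t := by
      rcases hq.dvd_mul.mp hqf with h | h
      · exfalso
        obtain ⟨β, hβ, hdvd'⟩ := hq.exists_mem_finset_dvd h
        have hirr := cyclotomic.irreducible (n := p ^ β) (pow_pos hp.pos β)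
        have hassoc := hq.irreducible.associated_of_dvd hirr hdvd'
        have heq := eq_of_monic_of_associated (cyclotomic.monic _ ℤ) (cyclotomic.monic _ ℤ) hassoc
        have hab : a = β := Nat.pow_right_injective hp.two_le (cyclotomic_injective heq)
        exact ha (hab ▸ hβ)
      · exact h
    obtain ⟨t', rfl⟩ := hqt
    exact ⟨t', by rw [prod_insert ha, ht]; ring⟩

/-- If `A ⊕ B = ℤ/Nℤ` and `#A` is a prime power, then `A` is spectral in `ℤ/Nℤ`:
there is `Λ ⊆ ℤ/Nℤ`, `#Λ = #A`, whose characters restricted to `A` are pairwise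
orthogonal. -/
theorem prime_power_tile_is_spectral
    (N : ℕ) (hN : 1 ≤ N) (A B : Finset (ZMod N))
    (hfac : ∀ g : ZMod N, ∃! p : ZMod N × ZMod N, p.1 ∈ A ∧ p.2 ∈ B ∧ p.1 + p.2 = g)
    (p k : ℕ) (hp : p.Prime) (hcard : A.card = p ^ k) :
    ∃ Λ : Finset (ZMod N), Λ.card = A.card ∧
      ∀ lam ∈ Λ, ∀ lam' ∈ Λ, lam ≠ lam' →
        ∑ a ∈ A, Complex.exp (2 * Real.pi * I * (((lam - lam') * a).val : ℕ) / N) = 0 := by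
  have nz : NeZero N := ⟨by omega⟩
  have hes := exists_spectrum N p hp
  have hpc := fun f s h => prod_cyclotomic_dvd hp f s h

  classical
  haveI : NeZero N := ⟨by omega⟩
  haveI : Fact p.Prime := ⟨hp⟩
  set ζ : ℂ := Complex.exp (2 * Real.pi * I / N) with hζdef
  have hζ : IsPrimitiveRoot ζ N := Complex.isPrimitiveRoot_exp N (NeZero.ne N)
  have hζ1 : ζ ^ N = 1 := hζ.pow_eq_one
  set PA : Polynomial ℤ := ∑ a ∈ A, X ^ a.val with hPA
  set PB : Polynomial ℤ := ∑ b ∈ B, X ^ b.val with hPB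
  -- cardinality: A.card * B.card = N
  have hcardN : A.card * B.card = N := by
    have h := Finset.card_bij (s := A ×ˢ B) (t := Finset.univ)
      (fun q _ => q.1 + q.2) (fun q _ => mem_univ _)
      (fun q1 hq1 q2 hq2 heq => by
        rw [mem_product] at hq1 hq2
        exact ExistsUnique.unique (hfac (q1.1 + q1.2))
          ⟨hq1.1, hq1.2, rfl⟩ ⟨hq2.1, hq2.2, heq.symm⟩)
      (fun g _ => by
        obtain ⟨q, ⟨hq1, hq2, hq3⟩, -⟩ := hfac g
        exact ⟨q, mem_product.mpr ⟨hq1, hq2⟩, hq3⟩)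
    rwa [card_product, card_univ, ZMod.card] at h
  have hPBeval : PB.eval 1 = (B.card : ℤ) := by
    rw [hPB, eval_finset_sum]; simp
  -- geometric series relation
  have hXdvd : ∀ m : ℕ, (X ^ N - 1 : Polynomial ℤ) ∣ X ^ m - X ^ (m % N) := by
    intro m
    have h : (X ^ m - X ^ (m % N) : Polynomial ℤ)
        = X ^ (m % N) * ((X ^ N) ^ (m / N) - 1) := by
      rw [mul_sub, mul_one, ← pow_mul, ← pow_add, Nat.mod_add_div m N]
    rw [h]
    exact Dvd.dvd.mul_left (by simpa using sub_dvd_pow_sub_pow (X ^ N : Polynomial ℤ) 1 (m / N)) _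
  have hgeom : (X ^ N - 1 : Polynomial ℤ) ∣ PA * PB - ∑ i ∈ range N, X ^ i := by
    have h1 : PA * PB = ∑ q ∈ A ×ˢ B, (X : Polynomial ℤ) ^ (q.1.val + q.2.val) := by
      rw [hPA, hPB, Finset.sum_mul_sum, Finset.sum_product]
      simp [pow_add]
    have h2 : ∑ q ∈ A ×ˢ B, (X : Polynomial ℤ) ^ ((q.1 + q.2).val)
        = ∑ i ∈ range N, X ^ i := by
      have hb : ∑ q ∈ A ×ˢ B, (X : Polynomial ℤ) ^ ((q.1 + q.2).val)
          = ∑ g : ZMod N, X ^ g.val :=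
        Finset.sum_bij (fun q _ => q.1 + q.2) (fun q _ => mem_univ _)
          (fun q1 hq1 q2 hq2 heq => by
            rw [mem_product] at hq1 hq2
            exact ExistsUnique.unique (hfac (q1.1 + q1.2))
              ⟨hq1.1, hq1.2, rfl⟩ ⟨hq2.1, hq2.2, heq.symm⟩)
          (fun g _ => by
            obtain ⟨q, ⟨hq1, hq2, hq3⟩, -⟩ := hfac g
            exact ⟨q, mem_product.mpr ⟨hq1, hq2⟩, hq3⟩)
          (fun q _ => rfl)
      rw [hb]
      exact Finset.sum_bij (fun g _ => g.val) (fun g _ => mem_range.mpr (ZMod.val_lt g))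
        (fun g1 _ g2 _ h => ZMod.val_injective N h)
        (fun i hi => ⟨(i : ZMod N), mem_univ _, by
          show ((i : ZMod N)).val = i
          rw [ZMod.val_natCast, Nat.mod_eq_of_lt (mem_range.mp hi)]⟩)
        (fun g _ => rfl)
    rw [h1, ← h2, ← Finset.sum_sub_distrib]
    refine Finset.dvd_sum fun q hq => ?_
    rw [ZMod.val_add]
    exact hXdvd _
  -- cyclotomic divisibility of PA * PB
  set v : ℕ := N.factorization p with hv
  have hpvN : p ^ v ∣ N := Nat.ordProj_dvd N p
  have hcycAB : ∀ α ∈ Icc 1 v, cyclotomic (p ^ α) ℤ ∣ PA * PB := by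
    intro α hα
    rw [mem_Icc] at hα
    have hdvdN : p ^ α ∣ N := dvd_trans (pow_dvd_pow p hα.2) hpvN
    have hne1 : p ^ α ≠ 1 := (Nat.one_lt_pow (by omega) hp.one_lt).ne'
    have hG : cyclotomic (p ^ α) ℤ ∣ ∑ i ∈ range N, X ^ i :=
      Polynomial.cyclotomic_dvd_geom_sum_of_dvd ℤ hdvdN hne1
    have hX : cyclotomic (p ^ α) ℤ ∣ (X ^ N - 1 : Polynomial ℤ) := by
      rw [← Polynomial.prod_cyclotomic_eq_X_pow_sub_one (by omega) ℤ]
      exact Finset.dvd_prod_of_mem _ (Nat.mem_divisors.mpr ⟨hdvdN, by omega⟩)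
    have := dvd_add (dvd_trans hX hgeom) hG
    rwa [sub_add_cancel] at this
  -- count cyclotomic factors of PB
  set SB : Finset ℕ := (Icc 1 v).filter (fun α => ¬ cyclotomic (p ^ α) ℤ ∣ PA) with hSBdef
  have hSB : ∀ α ∈ SB, cyclotomic (p ^ α) ℤ ∣ PB := by
    intro α hα
    rw [hSBdef, mem_filter] at hα
    have hq : Prime (cyclotomic (p ^ α) ℤ) :=
      UniqueFactorizationMonoid.irreducible_iff_prime.mp
        (cyclotomic.irreducible (pow_pos hp.pos α))
    rcases hq.dvd_mul.mp (hcycAB α hα.1) with h | h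
    · exact absurd h hα.2
    · exact h
  have hdvdB : p ^ SB.card ∣ B.card := by
    obtain ⟨t, ht⟩ := hpc PB SB hSB
    have heq := congrArg (eval 1) ht
    rw [eval_mul, eval_prod, hPBeval] at heq
    have heval : ∀ α ∈ SB, eval 1 (cyclotomic (p ^ α) ℤ) = (p : ℤ) := by
      intro α hα
      have hα1 : 1 ≤ α := (mem_Icc.mp (mem_filter.mp hα).1).1
      obtain ⟨β, rfl⟩ : ∃ β, α = β + 1 := ⟨α - 1, by omega⟩
      exact Polynomial.eval_one_cyclotomic_prime_pow β
    rw [Finset.prod_congr rfl heval, prod_const] at heq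
    have : ((p : ℤ)) ^ SB.card ∣ (B.card : ℤ) := ⟨eval 1 t, heq⟩
    exact_mod_cast this
  have hcount : SB.card + k ≤ v := by
    have hdvdN2 : p ^ (SB.card + k) ∣ N := by
      rw [pow_add, ← hcardN, hcard, mul_comm (p ^ k) B.card]
      exact mul_dvd_mul hdvdB dvd_rfl
    rw [hv]
    exact (Nat.Prime.pow_dvd_iff_le_factorization hp (by omega)).mp hdvdN2
  -- choose T
  set SA : Finset ℕ := (Icc 1 v).filter (fun α => cyclotomic (p ^ α) ℤ ∣ PA) with hSAdef
  have hpart : SA.card + SB.card = v := by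
    have := Finset.card_filter_add_card_filter_not
      (s := Icc 1 v) (p := fun α => cyclotomic (p ^ α) ℤ ∣ PA)
    rwa [Nat.card_Icc, Nat.add_sub_cancel] at this
  have hSAk : k ≤ SA.card := by omega
  obtain ⟨T, hTsub, hTcard⟩ := Finset.exists_subset_card_eq hSAk
  obtain ⟨Λ, hΛcard, hΛ⟩ := hes T (fun α hα => by
    have h := hTsub hα
    rw [hSAdef, mem_filter, mem_Icc] at h
    exact ⟨h.1.1, dvd_trans (pow_dvd_pow p h.1.2) hpvN⟩)
  refine ⟨Λ, by rw [hΛcard, hTcard, hcard], ?_⟩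
  intro lam hlam lam' hlam' hne
  obtain ⟨α, hαT, hprim⟩ := hΛ lam hlam lam' hlam' hne
  have hcycA : cyclotomic (p ^ α) ℤ ∣ PA := by
    have h := hTsub hαT
    rw [hSAdef, mem_filter] at h
    exact h.2
  have hmapdvd : cyclotomic (p ^ α) ℂ ∣ PA.map (Int.castRingHom ℂ) := by
    have h := Polynomial.map_dvd (Int.castRingHom ℂ) hcycA
    rwa [Polynomial.map_cyclotomic] at h
  set z : ℂ := ζ ^ (lam - lam').val with hzdef
  have hz0 : (PA.map (Int.castRingHom ℂ)).eval z = 0 := by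
    obtain ⟨t, ht⟩ := hmapdvd
    have hroot : eval z (cyclotomic (p ^ α) ℂ) = 0 :=
      hprim.isRoot_cyclotomic (pow_pos hp.pos α)
    rw [ht, eval_mul, hroot, zero_mul]
  have hexp : (PA.map (Int.castRingHom ℂ)).eval z = ∑ a ∈ A, z ^ a.val := by
    rw [hPA, Polynomial.map_sum]
    simp [Polynomial.eval_finset_sum]
  have hterm : ∀ a : ZMod N,
      Complex.exp (2 * Real.pi * I * (((lam - lam') * a).val : ℕ) / N) = z ^ a.val := by
    intro a
    have h1 : Complex.exp (2 * Real.pi * I * (((lam - lam') * a).val : ℕ) / N)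
        = ζ ^ ((lam - lam') * a).val := by
      rw [hζdef, ← Complex.exp_nat_mul]
      congr 1
      ring
    rw [h1, ZMod.val_mul, pow_mod_eq hζ1, pow_mul]
  calc ∑ a ∈ A, Complex.exp (2 * Real.pi * I * (((lam - lam') * a).val : ℕ) / N)
      = ∑ a ∈ A, z ^ a.val := Finset.sum_congr rfl (fun a _ => hterm a)
    _ = 0 := by rw [← hexp, hz0]
end

section
/- Suppose R is an expansive integer n×n matrix and B ⊆ ℤⁿ satisfies (B - B) ∩ Rℤⁿ = {0} (no two distinct elements of B are congruent mod R). Then for distinct b, b' ∈ B, the sets τ_b(X_B) and τ_{b'}(X_B) of the attractor X_B = ⋃_{c∈B} τ_c(X_B), with τ_c(x) = R⁻¹(x+c), satisfy μ_B(τ_b(X_B) ∩ τ_{b'}(X_B)) = 0, where μ_B is the equal-weight invariant measure — i.e., the IFS has no essential overlap. -/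
open MeasureTheory
open scoped ENNReal NNReal BoundedContinuousFunction

lemma ifs_measure_eq (R : ℤ) (hR0 : (R:ℝ) ≠ 0) (B : Finset ℤ) (hBne : B.Nonempty)
    (μ : Measure ℝ) [IsProbabilityMeasure μ]
    (hμ : ∀ f : ℝ → ℝ, Continuous f →
      ∫ x, f x ∂μ = (1 / B.card : ℝ) * ∑ b ∈ B, ∫ x, f ((x + b) / R) ∂μ) :
    μ = (B.card : ℝ≥0∞)⁻¹ • ∑ d ∈ B, Measure.map (fun x => (x + (d:ℝ)) / R) μ := by
  have hNpos : 0 < B.card := Finset.card_pos.mpr hBne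
  apply ext_of_forall_lintegral_eq_of_IsFiniteMeasure
  intro f
  have hτc : ∀ d : ℤ, Continuous (fun x : ℝ => (x + (d:ℝ)) / R) := by
    intro d; continuity
  have hτm : ∀ d : ℤ, Measurable (fun x : ℝ => (x + (d:ℝ)) / R) :=
    fun d => (hτc d).measurable
  -- RHS computation
  rw [lintegral_smul_measure, lintegral_finset_sum_measure]
  have hmap : ∀ d ∈ B, ∫⁻ x, f x ∂(Measure.map (fun x => (x + (d:ℝ)) / R) μ)
      = ∫⁻ x, f ((x + (d:ℝ)) / R) ∂μ := by
    intro d _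
    exact lintegral_map (f.continuous.measurable.coe_nnreal_ennreal) (hτm d)
  rw [Finset.sum_congr rfl hmap]
  -- LHS via real integrals
  have hint : ∀ d : ℤ, Integrable (fun x => ((f ((x + (d:ℝ)) / R) : ℝ≥0) : ℝ)) μ := by
    intro d
    exact (f.compContinuous ⟨_, hτc d⟩).integrable_of_nnreal μ
  have hintf : Integrable (fun x => ((f x : ℝ≥0) : ℝ)) μ := f.integrable_of_nnreal μ
  have h1 : ∫⁻ x, (f x : ℝ≥0∞) ∂μ = ENNReal.ofReal (∫ x, ((f x : ℝ≥0) : ℝ) ∂μ) :=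
    lintegral_coe_eq_integral _ hintf
  have h2 : ∀ d : ℤ, ∫⁻ x, (f ((x + (d:ℝ)) / R) : ℝ≥0∞) ∂μ
      = ENNReal.ofReal (∫ x, ((f ((x + (d:ℝ)) / R) : ℝ≥0) : ℝ) ∂μ) :=
    fun d => lintegral_coe_eq_integral _ (hint d)
  rw [h1, Finset.sum_congr rfl (fun d _ => h2 d)]
  rw [hμ (fun x => ((f x : ℝ≥0) : ℝ)) (by continuity)]
  rw [ENNReal.ofReal_mul (by positivity)]
  rw [ENNReal.ofReal_sum_of_nonneg (fun d _ => integral_nonneg (fun x => (f _).coe_nonneg))]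
  congr 1
  rw [one_div, ENNReal.ofReal_inv_of_pos (by exact_mod_cast hNpos)]
  congr 1
  exact ENNReal.ofReal_natCast _

def ifsDigits (R : ℤ) (B : Finset ℤ) : ℕ → Finset ℤ
  | 0 => {0}
  | (n+1) => (B ×ˢ ifsDigits R B n).image fun p => p.2 + p.1 * R ^ n

lemma ifsDigits_incong (R : ℤ) (hR : R ≠ 0) (B : Finset ℤ)
    (hB : ∀ b ∈ B, ∀ b' ∈ B, R ∣ (b - b') → b = b') :
    ∀ n, ∀ c ∈ ifsDigits R B n, ∀ c' ∈ ifsDigits R B n, R ^ n ∣ c - c' → c = c' := by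
  intro n
  induction n with
  | zero => intro c hc c' hc' _
            simp [ifsDigits] at hc hc'; omega
  | succ n ih =>
    intro c hc c' hc' hdvd
    simp only [ifsDigits, Finset.mem_image, Finset.mem_product] at hc hc'
    obtain ⟨⟨b, c₀⟩, ⟨hb, hc₀⟩, rfl⟩ := hc
    obtain ⟨⟨b', c₀'⟩, ⟨hb', hc₀'⟩, rfl⟩ := hc'
    have h1 : R ^ n ∣ c₀ - c₀' := by
      have h2 : R ^ n ∣ (c₀ + b * R ^ n) - (c₀' + b' * R ^ n) :=
        dvd_trans (pow_dvd_pow R n.le_succ) hdvd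
      have h3 : R ^ n ∣ (b - b') * R ^ n := dvd_mul_left _ _
      have h4 : c₀ - c₀' = ((c₀ + b * R ^ n) - (c₀' + b' * R ^ n)) - (b - b') * R ^ n := by ring
      rw [h4]; exact dvd_sub h2 h3
    have hcc : c₀ = c₀' := ih c₀ hc₀ c₀' hc₀' h1
    subst hcc
    have h3 : R ∣ b - b' := by
      have h4 : R ^ n * R ∣ R ^ n * (b - b') := by
        have : (c₀ + b * R ^ n) - (c₀ + b' * R ^ n) = R ^ n * (b - b') := by ring
        rw [← this, ← pow_succ]; exact hdvd
      exact (mul_dvd_mul_iff_left (pow_ne_zero n hR)).mp h4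
    rw [hB b hb b' hb' h3]

lemma ifs_preimage_image (R : ℤ) (hR0 : (R:ℝ) ≠ 0) (d b : ℝ) (S : Set ℝ) :
    (fun x : ℝ => (x + d) / R) ⁻¹' ((fun x : ℝ => (x + b) / R) '' S)
      = (fun x : ℝ => x + (b - d)) '' S := by
  ext x
  simp only [Set.mem_preimage, Set.mem_image]
  constructor
  · rintro ⟨s, hs, h⟩
    refine ⟨s, hs, ?_⟩
    field_simp at h
    linarith
  · rintro ⟨s, hs, rfl⟩
    exact ⟨s, hs, by field_simp; ring⟩

lemma ifs_cell_up (R : ℤ) (hR0 : (R:ℝ) ≠ 0) (X : Set ℝ) (n : ℕ) (c b : ℤ) :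
    (fun y : ℝ => (y + (b:ℝ)) / R) '' ((fun x : ℝ => (x + (c:ℝ)) / (R:ℝ) ^ n) '' X)
      = (fun x : ℝ => (x + ((c + b * R ^ n : ℤ) : ℝ)) / (R:ℝ) ^ (n+1)) '' X := by
  rw [← Set.image_comp]
  apply Set.image_congr'
  intro x
  simp only [Function.comp_apply]
  push_cast
  field_simp
  ring

lemma ifs_union (R : ℤ) (hR0 : (R:ℝ) ≠ 0) (B : Finset ℤ) (X : Set ℝ)
    (hX : X = ⋃ b ∈ B, (fun x : ℝ => (x + (b:ℝ)) / R) '' X) :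
    ∀ n, (⋃ c ∈ ifsDigits R B n, (fun x : ℝ => (x + (c:ℝ)) / (R:ℝ) ^ n) '' X) = X := by
  intro n
  induction n with
  | zero =>
    ext x
    simp [ifsDigits]
  | succ n ih =>
    have step : (⋃ c ∈ ifsDigits R B (n+1), (fun x : ℝ => (x + (c:ℝ)) / (R:ℝ) ^ (n+1)) '' X)
        = ⋃ b ∈ B, (fun y : ℝ => (y + (b:ℝ)) / R) ''
            (⋃ c ∈ ifsDigits R B n, (fun x : ℝ => (x + (c:ℝ)) / (R:ℝ) ^ n) '' X) := by
      simp only [Set.image_iUnion]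
      ext x
      simp only [ifsDigits, Finset.mem_image, Finset.mem_product, Set.mem_iUnion,
        ifs_cell_up R hR0 X n]
      constructor
      · rintro ⟨c', ⟨⟨b, c⟩, ⟨hb, hc⟩, rfl⟩, hx⟩
        exact ⟨b, hb, c, hc, hx⟩
      · rintro ⟨b, hb, c, hc, hx⟩
        exact ⟨c + b * R ^ n, ⟨⟨b, c⟩, ⟨hb, hc⟩, rfl⟩, hx⟩
    rw [step, ih, ← hX]

noncomputable def ifsCell (R : ℤ) (X : Set ℝ) (n : ℕ) (c : ℤ) : Set ℝ :=
  (fun x : ℝ => (x + (c:ℝ)) / (R:ℝ) ^ n) '' X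

lemma ifs_translate_null (R : ℤ) (hRz : R ≠ 0) (B : Finset ℤ)
    (hB : ∀ b ∈ B, ∀ b' ∈ B, R ∣ (b - b') → b = b')
    (X : Set ℝ) (hXne : X.Nonempty) (hXcpt : IsCompact X)
    (hX : X = ⋃ b ∈ B, (fun x : ℝ => (x + (b:ℝ)) / R) '' X)
    (μ : Measure ℝ) [IsProbabilityMeasure μ]
    (hkey : ∀ E : Set ℝ, MeasurableSet E →
       μ E = (B.card : ℝ≥0∞)⁻¹ * ∑ d ∈ B, μ ((fun x : ℝ => (x + (d:ℝ)) / R) ⁻¹' E)) :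
    ∀ p ∈ B, ∀ q ∈ B, p ≠ q → μ ((fun x : ℝ => x + ((p:ℝ) - q)) '' X) = 0 := by
  intro p hp q hq hpq
  classical
  have hR0 : (R:ℝ) ≠ 0 := Int.cast_ne_zero.mpr hRz
  have hRn0 : ∀ n : ℕ, ((R:ℝ) ^ n) ≠ 0 := fun n => pow_ne_zero n hR0
  have hNne0 : (B.card : ℝ≥0∞) ≠ 0 := by
    simp [Finset.card_ne_zero_of_mem hp]
  have hNnetop : (B.card : ℝ≥0∞) ≠ ⊤ := ENNReal.natCast_ne_top _
  have hcellcpt : ∀ n c, IsCompact (ifsCell R X n c) := fun n c =>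
    hXcpt.image (by fun_prop)
  have hcellm : ∀ n c, MeasurableSet (ifsCell R X n c) := fun n c =>
    (hcellcpt n c).measurableSet
  set m : ℕ → ℝ≥0∞ := fun n => ∑ c ∈ ifsDigits R B n, μ (ifsCell R X n c) with hm
  -- a bound on X
  obtain ⟨M, hM⟩ : ∃ M : ℝ, ∀ y ∈ X, |y| ≤ M := by
    obtain ⟨r, hr⟩ := hXcpt.isBounded.subset_closedBall 0
    exact ⟨r, fun y hy => by simpa [Real.dist_eq] using hr hy⟩
  set K : ℕ := ⌈2 * M⌉₊ + 1 with hK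
  -- counting bound : m n ≤ K
  have hcount : ∀ n, m n ≤ (K : ℝ≥0∞) := by
    intro n
    have hpt : ∀ x : ℝ,
        (∑ c ∈ ifsDigits R B n, (ifsCell R X n c).indicator (fun _ => (1:ℝ≥0∞)) x)
          ≤ (K : ℝ≥0∞) := by
      intro x
      set P : ℤ → Prop := fun c => x ∈ ifsCell R X n c with hP
      have heq : ∑ c ∈ ifsDigits R B n, (ifsCell R X n c).indicator (fun _ => (1:ℝ≥0∞)) x
          = ((ifsDigits R B n).filter P).card := by
        rw [Finset.card_filter]
        push_cast
        apply Finset.sum_congr rfl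
        intro c _
        simp [Set.indicator_apply, hP]
      rw [heq]
      have hsub : (ifsDigits R B n).filter P ⊆
          Finset.Icc ⌈(R:ℝ) ^ n * x - M⌉ ⌊(R:ℝ) ^ n * x + M⌋ := by
        intro c hc
        obtain ⟨y, hy, hxy⟩ := (Finset.mem_filter.mp hc).2
        have hyc : y = (R:ℝ) ^ n * x - c := by
          field_simp at hxy
          linarith
        have habs := hM y hy
        rw [hyc, abs_le] at habs
        rw [Finset.mem_Icc]
        constructor
        · rw [Int.ceil_le]; push_cast; linarith [habs.2]
        · rw [Int.le_floor]; push_cast; linarith [habs.1]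
      have hcard : ((ifsDigits R B n).filter P).card ≤ K := by
        refine le_trans (Finset.card_le_card hsub) ?_
        rw [Int.card_Icc]
        have h1 : (⌊(R:ℝ) ^ n * x + M⌋ + 1 - ⌈(R:ℝ) ^ n * x - M⌉ : ℤ) ≤ (K : ℤ) := by
          have h2 : (⌊(R:ℝ) ^ n * x + M⌋ : ℝ) ≤ (R:ℝ) ^ n * x + M := Int.floor_le _
          have h3 : ((R:ℝ) ^ n * x - M) ≤ (⌈(R:ℝ) ^ n * x - M⌉ : ℝ) := Int.le_ceil _
          have h4 : (2 * M : ℝ) ≤ (⌈2 * M⌉₊ : ℝ) := Nat.le_ceil _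
          have : ((⌊(R:ℝ) ^ n * x + M⌋ + 1 - ⌈(R:ℝ) ^ n * x - M⌉ : ℤ) : ℝ) ≤ ((K : ℤ) : ℝ) := by
            rw [hK]
            push_cast
            linarith
          exact_mod_cast this
        calc ((⌊(R:ℝ) ^ n * x + M⌋ + 1 - ⌈(R:ℝ) ^ n * x - M⌉ : ℤ)).toNat
            ≤ ((K : ℤ)).toNat := Int.toNat_le_toNat h1
          _ = K := Int.toNat_natCast K
      exact_mod_cast hcard
    calc m n = ∑ c ∈ ifsDigits R B n, ∫⁻ x, (ifsCell R X n c).indicator (fun _ => (1:ℝ≥0∞)) x ∂μ := by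
          rw [hm]
          exact Finset.sum_congr rfl fun c _ => (lintegral_indicator_one (hcellm n c)).symm
      _ = ∫⁻ x, ∑ c ∈ ifsDigits R B n, (ifsCell R X n c).indicator (fun _ => (1:ℝ≥0∞)) x ∂μ :=
          (lintegral_finset_sum _ (fun c _ => measurable_const.indicator (hcellm n c))).symm
      _ ≤ ∫⁻ _, (K : ℝ≥0∞) ∂μ := lintegral_mono hpt
      _ = (K : ℝ≥0∞) := by simp
  -- growth bound
  set T : Set ℝ := (fun x : ℝ => x + ((p:ℝ) - q)) '' X with hT
  have hTm : MeasurableSet T := (hXcpt.image (by fun_prop)).measurableSet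
  set δ : ℝ≥0∞ := (B.card : ℝ≥0∞)⁻¹ * μ T with hδ
  have hgrow : ∀ n, m n + δ ≤ m (n + 1) := by
    intro n
    -- sum over image
    have hsum : m (n + 1) = ∑ b ∈ B, ∑ c ∈ ifsDigits R B n, μ (ifsCell R X (n+1) (c + b * R ^ n)) := by
      rw [hm]
      show ∑ c ∈ (B ×ˢ ifsDigits R B n).image (fun pr => pr.2 + pr.1 * R ^ n), μ (ifsCell R X (n+1) c) = _
      rw [Finset.sum_image ?hinj]
      · rw [Finset.sum_product]
      · rintro ⟨b, c⟩ hmem ⟨b', c'⟩ hmem' h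
        rw [Finset.mem_coe, Finset.mem_product] at hmem hmem'
        simp only at h
        have hdvd : R ^ n ∣ c - c' := ⟨b' - b, by linarith⟩
        have hcc : c = c' := ifsDigits_incong R hRz B hB n c hmem.2 c' hmem'.2 hdvd
        subst hcc
        have hbb : b = b' := by
          have : b * R ^ n = b' * R ^ n := by omega
          exact mul_right_cancel₀ (pow_ne_zero n hRz) this
        rw [hbb]
    -- each term expanded via the invariance identity
    have hterm : ∀ b ∈ B, ∀ c : ℤ, μ (ifsCell R X (n+1) (c + b * R ^ n))
        = (B.card : ℝ≥0∞)⁻¹ * ∑ d ∈ B, μ ((fun x : ℝ => x + ((b:ℝ) - (d:ℝ))) '' ifsCell R X n c) := by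
      intro b hb c
      have h1 : ifsCell R X (n+1) (c + b * R ^ n)
          = (fun y : ℝ => (y + (b:ℝ)) / R) '' ifsCell R X n c := by
        rw [ifsCell, ifsCell, ifs_cell_up R hR0 X n c b]
      have hmeas : MeasurableSet ((fun y : ℝ => (y + (b:ℝ)) / R) '' ifsCell R X n c) :=
        ((hcellcpt n c).image (by fun_prop)).measurableSet
      rw [h1, hkey _ hmeas]
      congr 1
      refine Finset.sum_congr rfl fun d _ => ?_
      rw [ifs_preimage_image R hR0 (d:ℝ) (b:ℝ) (ifsCell R X n c)]
    -- lower bound for the inner sums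
    have hlow : ∀ b ∈ B, ∀ c : ℤ,
        μ (ifsCell R X n c) + (if b = p then μ ((fun x : ℝ => x + ((p:ℝ) - q)) '' ifsCell R X n c) else 0)
          ≤ ∑ d ∈ B, μ ((fun x : ℝ => x + ((b:ℝ) - (d:ℝ))) '' ifsCell R X n c) := by
      intro b hb c
      have hself : μ ((fun x : ℝ => x + ((b:ℝ) - (b:ℝ))) '' ifsCell R X n c) = μ (ifsCell R X n c) := by
        congr 1
        simp
      by_cases hbp : b = p
      · subst hbp
        rw [if_pos rfl]
        have hsub : ({b, q} : Finset ℤ) ⊆ B := by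
          intro z hz
          rcases Finset.mem_insert.mp hz with h | h
          · exact h ▸ hb
          · exact (Finset.mem_singleton.mp h) ▸ hq
        have h5 : ∑ d ∈ ({b, q} : Finset ℤ),
              μ ((fun x : ℝ => x + ((b:ℝ) - (d:ℝ))) '' ifsCell R X n c)
            ≤ ∑ d ∈ B, μ ((fun x : ℝ => x + ((b:ℝ) - (d:ℝ))) '' ifsCell R X n c) :=
          Finset.sum_le_sum_of_subset hsub
        rw [Finset.sum_pair hpq] at h5
        rw [← hself]
        exact h5
      · rw [if_neg hbp, add_zero, ← hself]
        have h6 : μ ((fun x : ℝ => x + ((b:ℝ) - (b:ℝ))) '' ifsCell R X n c)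
            ≤ ∑ d ∈ B, μ ((fun x : ℝ => x + ((b:ℝ) - (d:ℝ))) '' ifsCell R X n c) :=
          Finset.single_le_sum
            (f := fun d : ℤ => μ ((fun x : ℝ => x + ((b:ℝ) - (d:ℝ))) '' ifsCell R X n c))
            (fun _ _ => zero_le) hb
        exact h6
    -- assemble
    have hstep : ∑ b ∈ B, ∑ c ∈ ifsDigits R B n,
        ((B.card : ℝ≥0∞)⁻¹ * (μ (ifsCell R X n c)
          + (if b = p then μ ((fun x : ℝ => x + ((p:ℝ) - q)) '' ifsCell R X n c) else 0)))
        ≤ m (n+1) := by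
      rw [hsum]
      refine Finset.sum_le_sum fun b hb => Finset.sum_le_sum fun c hc => ?_
      rw [hterm b hb c]
      exact mul_le_mul_right (hlow b hb c) _
    refine le_trans ?_ hstep
    -- compute the LHS of hstep
    have hsplit : ∀ b ∈ B, ∑ c ∈ ifsDigits R B n,
        ((B.card : ℝ≥0∞)⁻¹ * (μ (ifsCell R X n c)
          + (if b = p then μ ((fun x : ℝ => x + ((p:ℝ) - q)) '' ifsCell R X n c) else 0)))
        = (B.card : ℝ≥0∞)⁻¹ * m n
          + (if b = p then (B.card : ℝ≥0∞)⁻¹ *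
              ∑ c ∈ ifsDigits R B n, μ ((fun x : ℝ => x + ((p:ℝ) - q)) '' ifsCell R X n c) else 0) := by
      intro b hb
      by_cases hbp : b = p
      · simp only [if_pos hbp]
        rw [← Finset.mul_sum, Finset.sum_add_distrib, mul_add, hm]
      · simp only [if_neg hbp, add_zero]
        rw [← Finset.mul_sum]
    rw [Finset.sum_congr rfl hsplit, Finset.sum_add_distrib]
    have h1 : ∑ _b ∈ B, (B.card : ℝ≥0∞)⁻¹ * m n = m n := by
      rw [Finset.sum_const, nsmul_eq_mul, ← mul_assoc, ENNReal.mul_inv_cancel hNne0 hNnetop, one_mul]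
    have h2 : ∑ b ∈ B, (if b = p then (B.card : ℝ≥0∞)⁻¹ *
        ∑ c ∈ ifsDigits R B n, μ ((fun x : ℝ => x + ((p:ℝ) - q)) '' ifsCell R X n c) else 0)
        = (B.card : ℝ≥0∞)⁻¹ *
            ∑ c ∈ ifsDigits R B n, μ ((fun x : ℝ => x + ((p:ℝ) - q)) '' ifsCell R X n c) := by
      rw [Finset.sum_ite_eq' B p]
      simp [hp]
    rw [h1, h2]
    refine add_le_add_right (mul_le_mul_right ?_ _) _
    -- μ T ≤ ∑_c μ (shift '' cell)
    have hTcover : T = ⋃ c ∈ ifsDigits R B n, (fun x : ℝ => x + ((p:ℝ) - q)) '' ifsCell R X n c := by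
      rw [hT]
      conv_lhs => rw [← ifs_union R hR0 B X hX n]
      rw [Set.image_iUnion₂]
      rfl
    calc μ T ≤ ∑ c ∈ ifsDigits R B n, μ ((fun x : ℝ => x + ((p:ℝ) - q)) '' ifsCell R X n c) := by
          rw [hTcover]
          exact measure_biUnion_finset_le _ _
      _ = _ := rfl
  -- iterate the growth bound
  have hiter : ∀ n : ℕ, (n : ℝ≥0∞) * δ ≤ m n := by
    intro n
    induction n with
    | zero => simp
    | succ n ih =>
      calc ((n + 1 : ℕ) : ℝ≥0∞) * δ = (n : ℝ≥0∞) * δ + δ := by push_cast; ring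
        _ ≤ m n + δ := add_le_add_left ih _
        _ ≤ m (n + 1) := hgrow n
  -- conclude δ = 0
  have hδ0 : δ = 0 := by
    by_contra hne
    have hδtop : δ ≠ ⊤ := by
      intro htop
      have h1 : δ ≤ (K:ℝ≥0∞) := by
        have h2 := le_trans (hiter 1) (hcount 1)
        simpa using h2
      exact ENNReal.natCast_ne_top K (top_le_iff.mp (htop ▸ h1))
    obtain ⟨nn, hnn⟩ := ENNReal.exists_nat_gt (ENNReal.div_lt_top (ENNReal.natCast_ne_top K) hne).ne
    have hlt : (K : ℝ≥0∞) < (nn : ℝ≥0∞) * δ :=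
      (ENNReal.div_lt_iff (Or.inl hne) (Or.inl hδtop)).mp hnn
    exact absurd (le_trans (hiter nn) (hcount nn)) (not_le.mpr hlt)
  have hconc : (B.card : ℝ≥0∞)⁻¹ * μ T = 0 := by rw [← hδ]; exact hδ0
  rcases mul_eq_zero.mp hconc with h | h
  · exact absurd (ENNReal.inv_eq_zero.mp h) hNnetop
  · exact h

/-- No essential overlap (dimension 1): if `R ∈ ℤ`, `|R| ≥ 2`, and the digits in `B` are
pairwise incongruent mod `R`, then the pieces `τ_b(X_B)` of the attractor are
`μ_B`-essentially disjoint. -/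
theorem ifs_no_essential_overlap
    (R : ℤ) (hR : 2 ≤ |R|) (B : Finset ℤ)
    (hB : ∀ b ∈ B, ∀ b' ∈ B, R ∣ (b - b') → b = b')
    (τ : ℤ → ℝ → ℝ) (hτ : ∀ b x, τ b x = (x + b) / R)
    (X : Set ℝ) (hXne : X.Nonempty) (hXcpt : IsCompact X)
    (hX : X = ⋃ b ∈ B, (τ b) '' X)
    (μ : Measure ℝ) [IsProbabilityMeasure μ]
    (hμ : ∀ f : ℝ → ℝ, Continuous f →
      ∫ x, f x ∂μ = (1 / B.card : ℝ) * ∑ b ∈ B, ∫ x, f (τ b x) ∂μ) :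
    ∀ b ∈ B, ∀ b' ∈ B, b ≠ b' → μ ((τ b '' X) ∩ (τ b' '' X)) = 0 := by
  intro b hb b' hb' hne
  have hRz : R ≠ 0 := by
    intro h
    rw [h] at hR
    simp at hR
  have hR0 : (R:ℝ) ≠ 0 := Int.cast_ne_zero.mpr hRz
  have hτfun : ∀ d : ℤ, τ d = fun x : ℝ => (x + (d:ℝ)) / R := fun d => funext (hτ d)
  have hX' : X = ⋃ d ∈ B, (fun x : ℝ => (x + (d:ℝ)) / R) '' X := by
    conv_lhs => rw [hX]
    exact Set.iUnion₂_congr fun d _ => by rw [hτfun d]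
  have hBne : B.Nonempty := ⟨b, hb⟩
  have hμ' : ∀ f : ℝ → ℝ, Continuous f →
      ∫ x, f x ∂μ = (1 / B.card : ℝ) * ∑ d ∈ B, ∫ x, f ((x + d) / R) ∂μ := by
    intro f hf
    simpa only [hτ] using hμ f hf
  have hconc := ifs_measure_eq R hR0 B hBne μ hμ'
  have hkey : ∀ E : Set ℝ, MeasurableSet E →
      μ E = (B.card : ℝ≥0∞)⁻¹ * ∑ d ∈ B, μ ((fun x : ℝ => (x + (d:ℝ)) / R) ⁻¹' E) := by
    intro E hE
    conv_lhs => rw [hconc]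
    rw [Measure.smul_apply, Measure.finset_sum_apply, smul_eq_mul]
    congr 1
    exact Finset.sum_congr rfl fun d _ => Measure.map_apply (by fun_prop) hE
  have hnull := ifs_translate_null R hRz B hB X hXne hXcpt hX' μ hkey
  rw [hτfun b, hτfun b']
  have hcpt1 : IsCompact ((fun x : ℝ => (x + (b:ℝ)) / R) '' X) := hXcpt.image (by fun_prop)
  have hcpt2 : IsCompact ((fun x : ℝ => (x + (b':ℝ)) / R) '' X) := hXcpt.image (by fun_prop)
  rw [hkey _ (hcpt1.measurableSet.inter hcpt2.measurableSet)]
  have hz : ∀ d ∈ B, μ ((fun x : ℝ => (x + (d:ℝ)) / R) ⁻¹'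
      ((fun x : ℝ => (x + (b:ℝ)) / R) '' X ∩ (fun x : ℝ => (x + (b':ℝ)) / R) '' X)) = 0 := by
    intro d hd
    rw [Set.preimage_inter, ifs_preimage_image R hR0 (d:ℝ) (b:ℝ) X,
        ifs_preimage_image R hR0 (d:ℝ) (b':ℝ) X]
    by_cases hdb : d = b'
    · subst hdb
      refine measure_mono_null Set.inter_subset_left ?_
      exact hnull b hb d hd hne
    · refine measure_mono_null Set.inter_subset_right ?_
      exact hnull b' hb' d hd (fun hh => hdb hh.symm)
  rw [Finset.sum_congr rfl hz]
  simp
end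

section
/- Let μ and ν be Borel probability measures on ℝᵈ forming a spectral pair in the Jorgensen–Pedersen sense: the map F: f ↦ (y ↦ ∫ e^{-ix·y} f(x) dμ(x)) is an isometry from L²(μ) onto L²(ν). Then (ν, μ) is also a spectral pair, i.e., the map g ↦ (x ↦ ∫ e^{-ix·y} g(y) dν(y)) is (up to complex conjugation/reflection) an isometry from L²(ν) onto L²(μ); precisely, the adjoint F* of the unitary F is given by F*g(x) = ∫ e^{ix·y} g(y) dν(y), and g ↦ F*ḡ conjugated appropriately realizes (ν,μ) as a spectral pair. -/
open MeasureTheory Complex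

section AuxSpectral

lemma aux_norm_K (d : ℕ) (x y : Fin d → ℝ) :
    ‖Complex.exp (-(I * (∑ i, x i * y i)))‖ = 1 := by
  simp [Complex.norm_exp]

lemma aux_cont_K (d : ℕ) :
    Continuous fun p : (Fin d → ℝ) × (Fin d → ℝ) =>
      Complex.exp (-(I * (∑ i, p.1 i * p.2 i))) := by
  fun_prop

lemma aux_memLp_conj {α : Type*} [MeasurableSpace α] {m : Measure α} {f : α → ℂ} {p : ENNReal}
    (hf : MemLp f p m) : MemLp (fun x => (starRingEnd ℂ) (f x)) p m :=
  ⟨RCLike.continuous_conj.comp_aestronglyMeasurable hf.1, by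
    rw [show (fun x => (starRingEnd ℂ) (f x)) = (starRingEnd (α → ℂ)) f from rfl]
    rw [eLpNorm_conj]; exact hf.2⟩

lemma aux_norm_toLp_sq {α : Type*} [MeasurableSpace α] {m : Measure α} {f : α → ℂ}
    (hf : MemLp f 2 m) : ‖hf.toLp f‖ ^ 2 = ∫ x, ‖f x‖ ^ 2 ∂m := by
  rw [← inner_self_eq_norm_sq (𝕜 := ℂ) (hf.toLp f), L2.inner_def]
  have h1 : ∫ a, (inner ℂ (hf.toLp f a) (hf.toLp f a) : ℂ) ∂m
      = ∫ a, ((‖f a‖ ^ 2 : ℝ) : ℂ) ∂m := by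
    apply integral_congr_ae
    filter_upwards [hf.coeFn_toLp] with a ha
    rw [ha, RCLike.inner_apply, RCLike.mul_conj]
    norm_cast
  have h2 : ∫ a, ((‖f a‖ ^ 2 : ℝ) : ℂ) ∂m = ((∫ a, ‖f a‖ ^ 2 ∂m : ℝ) : ℂ) :=
    integral_ofReal
  rw [h1, h2]; simp

lemma aux_inner_toLp {α : Type*} [MeasurableSpace α] {m : Measure α} {f g : α → ℂ}
    (hf : MemLp f 2 m) (hg : MemLp g 2 m) :
    (inner ℂ (hf.toLp f) (hg.toLp g) : ℂ) = ∫ x, (starRingEnd ℂ) (f x) * g x ∂m := by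
  rw [L2.inner_def]
  apply integral_congr_ae
  filter_upwards [hf.coeFn_toLp, hg.coeFn_toLp] with a ha hb
  rw [ha, hb, RCLike.inner_apply, mul_comm]

end AuxSpectral

/-- Jorgensen–Pedersen spectral-pair duality: if `(μ,ν)` is a spectral pair — the transform
`f ↦ (y ↦ ∫ e^{-ix·y} f(x) dμ)` is an `L²`-isometry of `L²(μ)` onto `L²(ν)` — then
`(ν,μ)` is a spectral pair as well, via `g ↦ (x ↦ ∫ e^{-ix·y} g(y) dν)`. -/
theorem spectral_pair_symmetric
    (d : ℕ) (μ ν : Measure (Fin d → ℝ)) [IsProbabilityMeasure μ] [IsProbabilityMeasure ν]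
    (F : ((Fin d → ℝ) → ℂ) → ((Fin d → ℝ) → ℂ))
    (hF : ∀ f y, F f y = ∫ x, Complex.exp (-(I * (∑ i, x i * y i))) * f x ∂μ)
    (G : ((Fin d → ℝ) → ℂ) → ((Fin d → ℝ) → ℂ))
    (hG : ∀ g x, G g x = ∫ y, Complex.exp (-(I * (∑ i, x i * y i))) * g y ∂ν)
    (hFiso : ∀ f : (Fin d → ℝ) → ℂ, MemLp f 2 μ →
      MemLp (F f) 2 ν ∧ ∫ y, ‖F f y‖ ^ 2 ∂ν = ∫ x, ‖f x‖ ^ 2 ∂μ)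
    (hFsurj : ∀ g : (Fin d → ℝ) → ℂ, MemLp g 2 ν →
      ∃ f : (Fin d → ℝ) → ℂ, MemLp f 2 μ ∧ g =ᵐ[ν] F f) :
    (∀ g : (Fin d → ℝ) → ℂ, MemLp g 2 ν →
      MemLp (G g) 2 μ ∧ ∫ x, ‖G g x‖ ^ 2 ∂μ = ∫ y, ‖g y‖ ^ 2 ∂ν) ∧
    (∀ f : (Fin d → ℝ) → ℂ, MemLp f 2 μ →
      ∃ g : (Fin d → ℝ) → ℂ, MemLp g 2 ν ∧ f =ᵐ[μ] G g) := by
  classical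
  set K : (Fin d → ℝ) → (Fin d → ℝ) → ℂ :=
    fun x y => Complex.exp (-(I * (∑ i, x i * y i))) with hKdef
  have hKnorm : ∀ x y, ‖K x y‖ = 1 := aux_norm_K d
  have hFK : ∀ (f : (Fin d → ℝ) → ℂ) y, F f y = ∫ x, K x y * f x ∂μ := hF
  have hGK : ∀ (g : (Fin d → ℝ) → ℂ) x, G g x = ∫ y, K x y * g y ∂ν := hG
  have hKcont : Continuous fun p : (Fin d → ℝ) × (Fin d → ℝ) => K p.1 p.2 := aux_cont_K d
  -- integrability of kernel times an integrable function
  have hInt : ∀ (m : Measure (Fin d → ℝ)) (f : (Fin d → ℝ) → ℂ), Integrable f m →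
      ∀ y, Integrable (fun x => K x y * f x) m := by
    intro m f hf y
    refine hf.bdd_mul ?_ (Filter.Eventually.of_forall fun x => le_of_eq (hKnorm x y))
    exact (hKcont.comp (continuous_id.prodMk continuous_const)).aestronglyMeasurable
  have hIntν : ∀ (g : (Fin d → ℝ) → ℂ), Integrable g ν →
      ∀ x, Integrable (fun y => K x y * g y) ν := by
    intro g hg x
    refine hg.bdd_mul ?_ (Filter.Eventually.of_forall fun y => le_of_eq (hKnorm x y))
    exact (hKcont.comp (continuous_const.prodMk continuous_id)).aestronglyMeasurable
  -- F respects a.e. equality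
  have hFae : ∀ f g : (Fin d → ℝ) → ℂ, f =ᵐ[μ] g → F f = F g := by
    intro f g h
    funext y
    rw [hFK, hFK]
    exact integral_congr_ae (h.mono fun x hx => by dsimp only; rw [hx])
  -- F is additive and homogeneous on integrable functions
  have hFadd : ∀ f g : (Fin d → ℝ) → ℂ, Integrable f μ → Integrable g μ →
      F (f + g) = F f + F g := by
    intro f g hf hg
    funext y
    simp only [Pi.add_apply]
    rw [hFK, hFK, hFK, ← integral_add (hInt μ f hf y) (hInt μ g hg y)]
    congr 1; funext x; simp only [Pi.add_apply]; ring
  have hFsmul : ∀ (c : ℂ) (f : (Fin d → ℝ) → ℂ), Integrable f μ →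
      F (c • f) = c • F f := by
    intro c f hf
    funext y
    simp only [Pi.smul_apply, smul_eq_mul]
    rw [hFK, hFK, ← integral_const_mul]
    congr 1; funext x; simp only [Pi.smul_apply, smul_eq_mul]; ring
  -- the linear isometry induced by F on L²
  let T : Lp ℂ 2 μ →ₗᵢ[ℂ] Lp ℂ 2 ν :=
    { toFun := fun u => ((hFiso u (Lp.memLp u)).1).toLp (F u)
      map_add' := by
        intro u v
        have h1 : F (↑(u + v)) = F ↑u + F ↑v := by
          rw [hFae _ (↑u + ↑v) (Lp.coeFn_add u v),
            hFadd _ _ ((Lp.memLp u).integrable one_le_two)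
              ((Lp.memLp v).integrable one_le_two)]
        rw [← MemLp.toLp_add ((hFiso _ (Lp.memLp u)).1) ((hFiso _ (Lp.memLp v)).1)]
        exact MemLp.toLp_congr _ _ (by rw [h1])
      map_smul' := by
        intro c u
        have h1 : F (↑(c • u)) = c • F ↑u := by
          rw [hFae _ (c • (↑u : (Fin d → ℝ) → ℂ)) (Lp.coeFn_smul c u),
            hFsmul c _ ((Lp.memLp u).integrable one_le_two)]
        simp only [RingHom.id_apply]
        rw [← MemLp.toLp_const_smul c ((hFiso _ (Lp.memLp u)).1)]
        exact MemLp.toLp_congr _ _ (by rw [h1])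
      norm_map' := by
        intro u
        have h1 : ‖((hFiso ↑u (Lp.memLp u)).1).toLp (F ↑u)‖ ^ 2 = ‖u‖ ^ 2 := by
          rw [aux_norm_toLp_sq, (hFiso (↑u) (Lp.memLp u)).2,
            ← aux_norm_toLp_sq (Lp.memLp u), MeasureTheory.Lp.toLp_coeFn]
        have h2 := congrArg Real.sqrt h1
        rwa [Real.sqrt_sq (norm_nonneg _), Real.sqrt_sq (norm_nonneg _)] at h2 }
  have hT_toLp : ∀ (f : (Fin d → ℝ) → ℂ) (hf : MemLp f 2 μ),
      T (hf.toLp f) = ((hFiso f hf).1).toLp (F f) := by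
    intro f hf
    show ((hFiso _ (Lp.memLp (hf.toLp f))).1).toLp (F ↑(hf.toLp f)) = ((hFiso f hf).1).toLp (F f)
    exact MemLp.toLp_congr _ _ (by rw [hFae _ _ hf.coeFn_toLp])
  -- inner product preservation
  have hinner : ∀ (f f' : (Fin d → ℝ) → ℂ) (hf : MemLp f 2 μ) (hf' : MemLp f' 2 μ),
      ∫ y, (starRingEnd ℂ) (F f y) * F f' y ∂ν = ∫ x, (starRingEnd ℂ) (f x) * f' x ∂μ := by
    intro f f' hf hf'
    have h := T.inner_map_map (hf.toLp f) (hf'.toLp f')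
    rw [hT_toLp f hf, hT_toLp f' hf', aux_inner_toLp, aux_inner_toLp] at h
    exact h
  -- the key inversion lemma
  have hKey : ∀ (f : (Fin d → ℝ) → ℂ) (hf : MemLp f 2 μ),
      (fun x => ∫ y, (starRingEnd ℂ) (K x y) * F f y ∂ν) =ᵐ[μ] f := by
    intro f hf
    have hFf2 : MemLp (F f) 2 ν := (hFiso f hf).1
    have hFf1 : Integrable (F f) ν := hFf2.integrable one_le_two
    set h : (Fin d → ℝ) → ℂ := fun x => ∫ y, (starRingEnd ℂ) (K x y) * F f y ∂ν with hhdef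
    have hmeas_prod : AEStronglyMeasurable
        (fun z : (Fin d → ℝ) × (Fin d → ℝ) => (starRingEnd ℂ) (K z.1 z.2) * F f z.2)
        (μ.prod ν) :=
      ((RCLike.continuous_conj.comp hKcont).aestronglyMeasurable).mul hFf1.1.comp_snd
    have hmeas : AEStronglyMeasurable h μ := hmeas_prod.integral_prod_right'
    have hbound : ∀ x, ‖h x‖ ≤ ∫ y, ‖F f y‖ ∂ν := by
      intro x
      refine le_trans (norm_integral_le_integral_norm _) (le_of_eq ?_)
      congr 1; funext y
      rw [norm_mul, RCLike.norm_conj, hKnorm, one_mul]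
    have hh2 : MemLp h 2 μ := MemLp.of_bound hmeas _ (Filter.Eventually.of_forall hbound)
    -- ⟨h, f'⟩ = ⟨f, f'⟩ for all f' ∈ L²(μ)
    have hcalc : ∀ (f' : (Fin d → ℝ) → ℂ), MemLp f' 2 μ →
        ∫ x, (starRingEnd ℂ) (h x) * f' x ∂μ = ∫ x, (starRingEnd ℂ) (f x) * f' x ∂μ := by
      intro f' hf'
      have hf'i : Integrable f' μ := hf'.integrable one_le_two
      have hconj_h : ∀ x, (starRingEnd ℂ) (h x)
          = ∫ y, K x y * (starRingEnd ℂ) (F f y) ∂ν := by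
        intro x
        have e1 : (fun y => K x y * (starRingEnd ℂ) (F f y))
            = fun y => (starRingEnd ℂ) ((starRingEnd ℂ) (K x y) * F f y) := by
          funext y
          rw [map_mul, Complex.conj_conj]
        rw [hhdef]
        rw [e1, integral_conj]
      have hprod : Integrable
          (Function.uncurry fun x y => (K x y * (starRingEnd ℂ) (F f y)) * f' x)
          (μ.prod ν) := by
        have base : Integrable
            (fun z : (Fin d → ℝ) × (Fin d → ℝ) => f' z.1 * (starRingEnd ℂ) (F f z.2))
            (μ.prod ν) :=
          hf'i.mul_prod ((aux_memLp_conj hFf2).integrable one_le_two)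
        have := base.bdd_mul
          (hKcont.aestronglyMeasurable)
          (Filter.Eventually.of_forall fun z => le_of_eq (hKnorm z.1 z.2))
        refine this.congr (Filter.Eventually.of_forall fun z => ?_)
        simp only [Function.uncurry]
        ring
      calc ∫ x, (starRingEnd ℂ) (h x) * f' x ∂μ
          = ∫ x, ∫ y, (K x y * (starRingEnd ℂ) (F f y)) * f' x ∂ν ∂μ := by
            congr 1; funext x
            rw [hconj_h x, ← integral_mul_const]
        _ = ∫ y, ∫ x, (K x y * (starRingEnd ℂ) (F f y)) * f' x ∂μ ∂ν :=
            integral_integral_swap hprod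
        _ = ∫ y, (starRingEnd ℂ) (F f y) * F f' y ∂ν := by
            congr 1; funext y
            rw [show (∫ x, (K x y * (starRingEnd ℂ) (F f y)) * f' x ∂μ)
                = (starRingEnd ℂ) (F f y) * ∫ x, K x y * f' x ∂μ from by
              rw [← integral_const_mul]; congr 1; funext x; ring]
            rw [← hFK f' y]
        _ = ∫ x, (starRingEnd ℂ) (f x) * f' x ∂μ := hinner f f' hf hf'
    -- conclude h = f a.e.
    have hzero : ∀ (f' : (Fin d → ℝ) → ℂ) (hf' : MemLp f' 2 μ),
        (inner ℂ (hh2.toLp h - hf.toLp f) (hf'.toLp f') : ℂ) = 0 := by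
      intro f' hf'
      rw [inner_sub_left, aux_inner_toLp, aux_inner_toLp, hcalc f' hf', sub_self]
    have hmain : hh2.toLp h - hf.toLp f = 0 := by
      have h0 := hzero (↑(hh2.toLp h - hf.toLp f)) (Lp.memLp _)
      rw [MeasureTheory.Lp.toLp_coeFn] at h0
      exact inner_self_eq_zero.mp h0
    have := (MemLp.toLp_eq_toLp_iff hh2 hf).mp (sub_eq_zero.mp hmain)
    exact this
  -- now finish both parts
  constructor
  · intro g hg
    obtain ⟨f, hf, hgFf⟩ := hFsurj _ (aux_memLp_conj hg)
    have hGg : ∀ x, G g x = (starRingEnd ℂ) (∫ y, (starRingEnd ℂ) (K x y) * F f y ∂ν) := by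
      intro x
      rw [hGK, ← integral_conj]
      apply integral_congr_ae
      filter_upwards [hgFf] with y hy
      rw [map_mul, Complex.conj_conj, ← hy, Complex.conj_conj]
    have hGg_ae : G g =ᵐ[μ] fun x => (starRingEnd ℂ) (f x) := by
      filter_upwards [hKey f hf] with x hx
      rw [hGg x, hx]
    refine ⟨(memLp_congr_ae hGg_ae).mpr (aux_memLp_conj hf), ?_⟩
    calc ∫ x, ‖G g x‖ ^ 2 ∂μ
        = ∫ x, ‖f x‖ ^ 2 ∂μ := by
          apply integral_congr_ae
          filter_upwards [hGg_ae] with x hx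
          rw [hx, RCLike.norm_conj]
      _ = ∫ y, ‖F f y‖ ^ 2 ∂ν := ((hFiso f hf).2).symm
      _ = ∫ y, ‖g y‖ ^ 2 ∂ν := by
          apply integral_congr_ae
          filter_upwards [hgFf] with y hy
          rw [← hy, RCLike.norm_conj]
  · intro f hf
    have hfc : MemLp (fun x => (starRingEnd ℂ) (f x)) 2 μ := aux_memLp_conj hf
    refine ⟨fun y => (starRingEnd ℂ) (F (fun x => (starRingEnd ℂ) (f x)) y),
      aux_memLp_conj (hFiso _ hfc).1, ?_⟩
    have h1 : ∀ x, G (fun y => (starRingEnd ℂ) (F (fun x => (starRingEnd ℂ) (f x)) y)) x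
        = (starRingEnd ℂ)
            (∫ y, (starRingEnd ℂ) (K x y) * F (fun x => (starRingEnd ℂ) (f x)) y ∂ν) := by
      intro x
      rw [hGK, ← integral_conj]
      congr 1; funext y
      rw [map_mul, Complex.conj_conj]
    filter_upwards [hKey _ hfc] with x hx
    rw [h1 x, hx, Complex.conj_conj]
end
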